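/- arXiv:1903.00331 — 4 statements merged into one kernel-verified Lean document; each statement's English description precedes it below -/
import Mathlib

section
/- For every n ∈ ℕ there exists an n-particle configuration C_n whose atomic positions form a subset of the square lattice ℤ², which has alternating charge distribution (bonded atoms always carry opposite charges), and whose energy equals E(C_n) = −⌊2n − 2√n⌋. In particular, the minimal energy over all n-particle configurations is at most −⌊2n − 2√n⌋. -/
open scoped BigOperators
open Real

noncomputable section

/-- Points of the plane. -/
abbrev Pt := EuclideanSpace ℝ (Fin 2)

/-- An `n`-particle configuration: positions in the plane together with charges in `{-1, 1}`. -/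
structure Config (n : ℕ) where
  x : Fin n → Pt
  q : Fin n → ℤ
  hq : ∀ i, q i = 1 ∨ q i = -1

/-- The configurational energy
`E(C) = (1/2) Σ_{i≠j, q_i=q_j} V_r(|x_i-x_j|) + (1/2) Σ_{i≠j, q_i≠q_j} V_a(|x_i-x_j|)`. -/
def energy (Va Vr : ℝ → EReal) {n : ℕ} (C : Config n) : EReal :=
  ((1/2 : ℝ) : EReal) * (∑ i : Fin n, ∑ j : Fin n,
      if i ≠ j ∧ C.q i = C.q j then Vr (dist (C.x i) (C.x j)) else 0)
  + ((1/2 : ℝ) : EReal) * (∑ i : Fin n, ∑ j : Fin n,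
      if i ≠ j ∧ C.q i ≠ C.q j then Va (dist (C.x i) (C.x j)) else 0)

/-- Slope of (the real part of) `V` between `a` and `r`. -/
def slope' (V : ℝ → EReal) (a r : ℝ) : ℝ := ((V r).toReal - (V a).toReal) / (r - a)

/-- Assumptions [i]-[viii] on the attractive-repulsive potential `Va` and the repulsive
potential `Vr`, with reference parameter `r₀ ∈ [1, (2 sin(π/7))⁻¹)`.  The left derivative of
`Vr` at `√2` is encoded as the supremum of slopes from the left, and the right derivative
of `Vr` at `1` as the infimum of slopes from the right (`Vr` is convex and real-valued
on `[1,∞)`, so these coincide with the one-sided derivatives). -/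
structure PotentialAssumptions (r₀ : ℝ) (Va Vr : ℝ → EReal) : Prop where
  r₀_lb : 1 ≤ r₀
  r₀_ub : r₀ < (2 * Real.sin (Real.pi / 7))⁻¹
  va_inf : ∀ r : ℝ, r < 1 → Va r = ⊤
  va_one : Va 1 = ((-1 : ℝ) : EReal)
  va_gt : ∀ r : ℝ, r ≠ 1 → ((-1 : ℝ) : EReal) < Va r
  va_nonpos : ∀ r : ℝ, 1 ≤ r → Va r ≤ 0
  va_zero : ∀ r : ℝ, r₀ < r → Va r = 0
  vr_inf : ∀ r : ℝ, r < 1 → Vr r = ⊤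
  vr_nonneg : ∀ r : ℝ, 1 ≤ r → 0 ≤ Vr r
  vr_fin : ∀ r : ℝ, 1 ≤ r → Vr r < ⊤
  vr_antitone : ∀ r s : ℝ, 1 ≤ r → r ≤ s → Vr s ≤ Vr r
  vr_convex : ConvexOn ℝ (Set.Ici (1 : ℝ)) (fun r => (Vr r).toReal)
  vr_quant : ((6 : ℝ) : EReal) < Vr (2 * r₀ * Real.sin (Real.pi / 5))
  vr_zero_iff : ∀ r : ℝ, Vr r = 0 ↔ Real.sqrt 2 ≤ r
  slope_left : sSup (slope' Vr (Real.sqrt 2) '' Set.Ico 1 (Real.sqrt 2))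
      < -16 / (Real.sqrt 2 * Real.pi)
  slope_right : ∀ r : ℝ, 1 < r → r ≤ r₀ →
      -(1/2) * sInf (slope' Vr 1 '' Set.Ioi (1 : ℝ)) < slope' Va 1 r

/-- The net charge `Q(C) = Σ_i q_i`. -/
def netCharge {n : ℕ} (C : Config n) : ℤ := ∑ i : Fin n, C.q i

/-- The bond graph: atoms are bonded iff `0 < |x_i - x_j| ≤ r₀`. -/
def bondGraph (r₀ : ℝ) {n : ℕ} (C : Config n) : SimpleGraph (Fin n) where
  Adj i j := C.x i ≠ C.x j ∧ dist (C.x i) (C.x j) ≤ r₀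
  symm := ⟨fun i j h => ⟨h.1.symm, by rw [dist_comm]; exact h.2⟩⟩
  loopless := ⟨fun i h => h.1 rfl⟩

/-- The number of bonds. -/
def numBonds (r₀ : ℝ) {n : ℕ} (C : Config n) : ℕ := (bondGraph r₀ C).edgeSet.ncard

/-- A ground state minimizes the energy among all `n`-particle configurations. -/
def IsGroundState (Va Vr : ℝ → EReal) {n : ℕ} (C : Config n) : Prop :=
  ∀ C' : Config n, energy Va Vr C ≤ energy Va Vr C'

/-- Alternating charge distribution: bonded atoms have opposite charges. -/
def AlternatingCharges (r₀ : ℝ) {n : ℕ} (C : Config n) : Prop :=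
  ∀ i j : Fin n, (bondGraph r₀ C).Adj i j → C.q i ≠ C.q j

/-- A bond is acyclic if it lies on no simple cycle of the graph. -/
def IsAcyclicBond {n : ℕ} (G : SimpleGraph (Fin n)) (e : Sym2 (Fin n)) : Prop :=
  e ∈ G.edgeSet ∧ ∀ (u : Fin n) (c : G.Walk u u), c.IsCycle → e ∉ c.edges

/-- `v` lies on a simple cycle of `G` whose edge set is `S`. -/
def LiesOnCycleWithEdges {n : ℕ} (G : SimpleGraph (Fin n)) (v : Fin n)
    (S : Set (Sym2 (Fin n))) : Prop :=
  ∃ (u : Fin n) (c : G.Walk u u), c.IsCycle ∧ v ∈ c.support ∧ S = {e | e ∈ c.edges}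

/-- A bridge: an acyclic bond contained in a simple path connecting two vertices lying
in two distinct cycles. -/
def IsBridgeBond {n : ℕ} (G : SimpleGraph (Fin n)) (e : Sym2 (Fin n)) : Prop :=
  IsAcyclicBond G e ∧ ∃ (u v : Fin n) (p : G.Walk u v) (S₁ S₂ : Set (Sym2 (Fin n))),
    p.IsPath ∧ e ∈ p.edges ∧ LiesOnCycleWithEdges G u S₁ ∧ LiesOnCycleWithEdges G v S₂ ∧
    S₁ ≠ S₂

/-- A flag: an acyclic bond which is not a bridge. -/
def IsFlagBond {n : ℕ} (G : SimpleGraph (Fin n)) (e : Sym2 (Fin n)) : Prop :=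
  IsAcyclicBond G e ∧ ¬ IsBridgeBond G e

/-- The square lattice `ℤ² ⊂ ℝ²`. -/
def squareLattice : Set Pt := {p | (∃ a : ℤ, p 0 = (a : ℝ)) ∧ (∃ b : ℤ, p 1 = (b : ℝ))}

/-- The set of attainable net charges `Q_net(n) = (2ℤ + n mod 2) ∩ [-n, n]`. -/
def Qnet (n : ℕ) : Set ℤ := {q | |q| ≤ (n : ℤ) ∧ q % 2 = (n : ℤ) % 2}

/-- The minimal energy among `n`-particle configurations with net charge `qnet`. -/
def Emin (Va Vr : ℝ → EReal) (n : ℕ) (qnet : ℤ) : EReal :=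
  sInf ((fun C : Config n => energy Va Vr C) '' {C : Config n | netCharge C = qnet})

/-- The saturation net charge
`q_sat^n = min {q ∈ Q_net(n) ∩ [0,n] : E^n_min(q) = -2n + 2q}`. -/
def qsat (Va Vr : ℝ → EReal) (n : ℕ) : ℤ :=
  sInf {qnet : ℤ | qnet ∈ Qnet n ∧ 0 ≤ qnet ∧
    Emin Va Vr n qnet = (((-2) * (n : ℝ) + 2 * (qnet : ℝ) : ℝ) : EReal)}

/-- A configuration is optimal (for its own net charge) if it attains `E^n_min(Q(C))`. -/
def IsOptimal (Va Vr : ℝ → EReal) {n : ℕ} (C : Config n) : Prop :=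
  energy Va Vr C = Emin Va Vr n (netCharge C)

/-- The function `φ` characterizing the saturation net charge. -/
def phi (n : ℕ) : ℤ :=
  if n = 0 then 0
  else if n = 1 then 1
  else if n % 2 = 1 then 2 * ⌊(-1/2 : ℝ) + (1/2) * Real.sqrt (2 * (n : ℝ) - 5)⌋ + 3
  else 2 * ⌊(1/2 : ℝ) * Real.sqrt (2 * (n : ℝ) - 4)⌋ + 2

/-- The neighborhood `N(x_i) = (X_n \ {x_i}) ∩ {|x - x_i| ≤ r₀}`. -/
def nbhd (r₀ : ℝ) {n : ℕ} (C : Config n) (i : Fin n) : Set Pt :=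
  {y | (∃ j : Fin n, C.x j = y) ∧ y ≠ C.x i ∧ dist y (C.x i) ≤ r₀}

/-- The square `S_n = {x ∈ ℤ² : x₁,x₂ ≥ 0, |x|_∞ ≤ ⌊√n - 1⌋}`. -/
def Sn (n : ℕ) : Set Pt :=
  {p | ∃ a b : ℤ, p 0 = (a : ℝ) ∧ p 1 = (b : ℝ) ∧ 0 ≤ a ∧ 0 ≤ b ∧
    max a b ≤ ⌊Real.sqrt (n : ℝ) - 1⌋}

/-- The diamond `D_n = {x ∈ ℤ² : |x|₁ ≤ ⌊(-1 + √(2n-1))/2⌋}`. -/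
def Dn (n : ℕ) : Set Pt :=
  {p | ∃ a b : ℤ, p 0 = (a : ℝ) ∧ p 1 = (b : ℝ) ∧
    |a| + |b| ≤ ⌊((-1) + Real.sqrt (2 * (n : ℝ) - 1)) / 2⌋}

/-- The square `S_{k²} = {x ∈ ℤ² : x₁,x₂ ≥ 0, |x|_∞ ≤ k - 1}` with `k²` lattice points. -/
def SqK (k : ℕ) : Set Pt :=
  {p | ∃ a b : ℤ, p 0 = (a : ℝ) ∧ p 1 = (b : ℝ) ∧ 0 ≤ a ∧ 0 ≤ b ∧
    max a b ≤ (k : ℤ) - 1}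

/-- `β(n) = 2n - 2√n`. -/
def beta (n : ℕ) : ℝ := 2 * (n : ℝ) - 2 * Real.sqrt (n : ℝ)

end


/-! ### Auxiliary construction: spiral enumeration of the first-quadrant square lattice -/

namespace UBC

def ptAux (k j : ℕ) : ℤ × ℤ :=
  if j ≤ k then ((k : ℤ), (j : ℤ)) else (2 * (k : ℤ) - (j : ℤ), (k : ℤ))

/-- spiral enumeration of the first-quadrant lattice points -/
def pt (m : ℕ) : ℤ × ℤ := ptAux (Nat.sqrt m) (m - Nat.sqrt m * Nat.sqrt m)

/-- inverse index -/
def idx (p : ℤ × ℤ) : ℤ :=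
  if p.2 ≤ p.1 then p.1 ^ 2 + p.2 else p.2 ^ 2 + 2 * p.2 - p.1

lemma sqrt_facts (m : ℕ) : Nat.sqrt m * Nat.sqrt m ≤ m ∧
    m ≤ Nat.sqrt m * Nat.sqrt m + 2 * Nat.sqrt m := by
  refine ⟨Nat.sqrt_le m, ?_⟩
  have := Nat.lt_succ_sqrt m
  simp only [Nat.succ_mul, Nat.mul_succ] at this
  omega

lemma sqrt_eq_of {m x : ℕ} (h1 : x * x ≤ m) (h2 : m < (x+1)*(x+1)) : Nat.sqrt m = x := by
  have a := Nat.le_sqrt.mpr h1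
  have b := Nat.sqrt_lt.mpr h2
  omega

/-- canonical decomposition -/
lemma pt_eq (m : ℕ) : ∃ k j : ℕ, k * k ≤ m ∧ m = k * k + j ∧ j ≤ 2 * k ∧
    Nat.sqrt m = k ∧ pt m = ptAux k j := by
  obtain ⟨h1, h2⟩ := sqrt_facts m
  exact ⟨Nat.sqrt m, m - Nat.sqrt m * Nat.sqrt m, h1, by omega, by omega, rfl, rfl⟩

lemma idx_ptAux {k j : ℕ} (hj : j ≤ 2 * k) : idx (ptAux k j) = (k * k + j : ℕ) := by
  by_cases hc : j ≤ k
  · simp only [ptAux, idx, hc, if_true]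
    rw [if_pos (by exact_mod_cast hc)]
    push_cast; ring
  · simp only [ptAux, idx, hc, if_false]
    rw [if_neg (by push_cast; omega)]
    push_cast; ring

lemma idx_pt (m : ℕ) : idx (pt m) = m := by
  obtain ⟨k, j, _, hm, hj, _, hpt⟩ := pt_eq m
  rw [hpt, idx_ptAux hj, hm]

lemma ptAux_nonneg {k j : ℕ} (hj : j ≤ 2 * k) : 0 ≤ (ptAux k j).1 ∧ 0 ≤ (ptAux k j).2 := by
  by_cases hc : j ≤ k <;> simp only [ptAux, hc, if_true, if_false] <;>
    exact ⟨by push_cast; omega, by push_cast; omega⟩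

lemma pt_nonneg (m : ℕ) : 0 ≤ (pt m).1 ∧ 0 ≤ (pt m).2 := by
  obtain ⟨k, j, _, hm, hj, _, hpt⟩ := pt_eq m
  rw [hpt]; exact ptAux_nonneg hj

lemma pt_inj : Function.Injective pt := by
  intro a b hab
  have h := idx_pt a
  rw [hab, idx_pt] at h
  exact_mod_cast h.symm

lemma idx_nonneg {p : ℤ × ℤ} (h1 : 0 ≤ p.1) (h2 : 0 ≤ p.2) : 0 ≤ idx p := by
  unfold idx; split <;> nlinarith

lemma pt_idx (p : ℤ × ℤ) (h1 : 0 ≤ p.1) (h2 : 0 ≤ p.2) : pt (idx p).toNat = p := by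
  obtain ⟨px, py⟩ := p
  simp only at h1 h2
  obtain ⟨x, rfl⟩ := Int.eq_ofNat_of_zero_le h1
  obtain ⟨y, rfl⟩ := Int.eq_ofNat_of_zero_le h2
  unfold idx
  by_cases hc : (y:ℤ) ≤ (x:ℤ)
  · rw [if_pos hc]
    have hyx : y ≤ x := by exact_mod_cast hc
    have ht : ((x:ℤ)^2 + y).toNat = x * x + y := by
      have h' : ((x:ℤ)^2 + y) = ((x*x+y : ℕ) : ℤ) := by push_cast; ring
      rw [h', Int.toNat_natCast]
    rw [ht]
    have hs : Nat.sqrt (x * x + y) = x := sqrt_eq_of (by omega) (by nlinarith)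
    simp only [pt, hs, ptAux]
    rw [if_pos (by omega)]
    rw [Prod.mk.injEq]
    exact ⟨rfl, by push_cast; omega⟩
  · rw [if_neg hc]
    have hyx : x < y := by omega
    have ht : ((y:ℤ)^2 + 2*y - x).toNat = y * y + (2*y - x) := by
      have h' : ((y:ℤ)^2 + 2*y - x) = ((y*y+(2*y-x) : ℕ) : ℤ) := by
        push_cast [Nat.cast_sub (by omega : x ≤ 2*y)]; ring
      rw [h', Int.toNat_natCast]
    rw [ht]
    have hs : Nat.sqrt (y * y + (2*y - x)) = y := sqrt_eq_of (by omega) (by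
      have h'' : (y+1)*(y+1) = y*y+2*y+1 := by ring
      omega)
    simp only [pt, hs, ptAux]
    rw [if_neg (by omega)]
    rw [Prod.mk.injEq]
    exact ⟨by push_cast; omega, rfl⟩

/-! ### adjacency -/

def adj (p q : ℤ × ℤ) : Prop := (p.1 - q.1)^2 + (p.2 - q.2)^2 = 1

instance (p q : ℤ × ℤ) : Decidable (adj p q) := inferInstanceAs (Decidable (_ = _))

lemma adj_symm {p q : ℤ × ℤ} (h : adj p q) : adj q p := by
  unfold adj at *; nlinarith [h]

lemma adj_cases {p q : ℤ × ℤ} (h : adj p q) :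
    p = (q.1 - 1, q.2) ∨ p = (q.1 + 1, q.2) ∨ p = (q.1, q.2 - 1) ∨ p = (q.1, q.2 + 1) := by
  obtain ⟨p1, p2⟩ := p; obtain ⟨q1, q2⟩ := q
  unfold adj at h; simp only at h
  have ha := abs_le_of_sq_le_sq' (show (p1-q1)^2 ≤ 1^2 by nlinarith [sq_nonneg (p2-q2)]) one_pos.le
  have hb := abs_le_of_sq_le_sq' (show (p2-q2)^2 ≤ 1^2 by nlinarith [sq_nonneg (p1-q1)]) one_pos.le
  simp only [Prod.mk.injEq]
  obtain ⟨a, haa⟩ : ∃ a, p1 = q1 + a := ⟨p1 - q1, by ring⟩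
  obtain ⟨b, hbb⟩ : ∃ b, p2 = q2 + b := ⟨p2 - q2, by ring⟩
  subst haa; subst hbb
  simp only [add_sub_cancel_left] at h ha hb
  have ha1 : -1 ≤ a := ha.1
  have ha2 : a ≤ 1 := ha.2
  have hb1 : -1 ≤ b := hb.1
  have hb2 : b ≤ 1 := hb.2
  interval_cases a <;> interval_cases b <;> norm_num at h <;> omega

def ind (n : ℕ) (q : ℤ × ℤ) : ℤ := if 0 ≤ q.1 ∧ 0 ≤ q.2 ∧ idx q < (n : ℤ) then 1 else 0

lemma sum_pt_eq (n : ℕ) (q : ℤ × ℤ) :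
    (∑ i ∈ Finset.range n, if pt i = q then (1:ℤ) else 0) = ind n q := by
  by_cases hq : 0 ≤ q.1 ∧ 0 ≤ q.2 ∧ idx q < (n : ℤ)
  · obtain ⟨h1, h2, h3⟩ := hq
    have hnn := idx_nonneg h1 h2
    rw [Finset.sum_eq_single_of_mem ((idx q).toNat)]
    · rw [if_pos (pt_idx q h1 h2)]; unfold ind; rw [if_pos ⟨h1, h2, h3⟩]
    · simp only [Finset.mem_range]; omega
    · intro i _ hne
      rw [if_neg]
      intro hEq
      apply hne
      have h := idx_pt i
      rw [hEq] at h
      omega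
  · unfold ind
    rw [if_neg hq]
    apply Finset.sum_eq_zero
    intro i hi
    rw [if_neg]
    intro hEq
    apply hq
    have h1 := (pt_nonneg i).1
    have h2 := (pt_nonneg i).2
    rw [hEq] at h1 h2
    refine ⟨h1, h2, ?_⟩
    have h := idx_pt i
    rw [hEq] at h
    simp only [Finset.mem_range] at hi
    omega

def Bsum (n : ℕ) : ℤ := ∑ i ∈ Finset.range n, if adj (pt i) (pt n) then 1 else 0

lemma indicator_key (p q : ℤ × ℤ) : (if adj p q then (1:ℤ) else 0) =
    (if p = (q.1 - 1, q.2) then (1:ℤ) else 0) + (if p = (q.1 + 1, q.2) then 1 else 0) +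
    (if p = (q.1, q.2 - 1) then 1 else 0) + (if p = (q.1, q.2 + 1) then 1 else 0) := by
  by_cases ha : adj p q
  · rw [if_pos ha]
    rcases adj_cases ha with h | h | h | h <;> subst h <;>
      simp [Prod.ext_iff] <;> omega
  · have e1 : p ≠ (q.1 - 1, q.2) := fun hEq => ha (by subst hEq; unfold adj; ring_nf)
    have e2 : p ≠ (q.1 + 1, q.2) := fun hEq => ha (by subst hEq; unfold adj; ring_nf)
    have e3 : p ≠ (q.1, q.2 - 1) := fun hEq => ha (by subst hEq; unfold adj; ring_nf)
    have e4 : p ≠ (q.1, q.2 + 1) := fun hEq => ha (by subst hEq; unfold adj; ring_nf)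
    rw [if_neg ha, if_neg e1, if_neg e2, if_neg e3, if_neg e4]
    norm_num

lemma Bsum_eq_nbrs (n : ℕ) : Bsum n =
    ind n ((pt n).1 - 1, (pt n).2) + ind n ((pt n).1 + 1, (pt n).2) +
    ind n ((pt n).1, (pt n).2 - 1) + ind n ((pt n).1, (pt n).2 + 1) := by
  unfold Bsum
  rw [← sum_pt_eq, ← sum_pt_eq, ← sum_pt_eq, ← sum_pt_eq,
    ← Finset.sum_add_distrib, ← Finset.sum_add_distrib, ← Finset.sum_add_distrib]
  exact Finset.sum_congr rfl fun i _ => indicator_key (pt i) (pt n)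

lemma ind_pos {n : ℕ} {q : ℤ × ℤ} (h1 : 0 ≤ q.1) (h2 : 0 ≤ q.2) (h3 : idx q < (n:ℤ)) :
    ind n q = 1 := by unfold ind; rw [if_pos ⟨h1, h2, h3⟩]

lemma ind_neg_x {n : ℕ} {q : ℤ × ℤ} (h : q.1 < 0) : ind n q = 0 := by
  unfold ind; rw [if_neg]; push_neg; intro h'; omega

lemma ind_neg_y {n : ℕ} {q : ℤ × ℤ} (h : q.2 < 0) : ind n q = 0 := by
  unfold ind; rw [if_neg]; push_neg; intro _ h'; omega

lemma ind_big {n : ℕ} {q : ℤ × ℤ} (h : (n:ℤ) ≤ idx q) : ind n q = 0 := by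
  unfold ind; rw [if_neg]; push_neg; intro _ _; omega

lemma pt_val {k j : ℕ} (hs : Nat.sqrt (k*k+j) = k) : pt (k*k+j) = ptAux k j := by
  unfold pt; rw [hs]; congr 1; omega

lemma Bsum_col {k j : ℕ} (hj : j ≤ k) :
    Bsum (k*k+j) = (if 1 ≤ j then 1 else 0) + (if j + 1 ≤ k then 1 else 0) := by
  have hs : Nat.sqrt (k*k+j) = k := sqrt_eq_of (by omega) (by nlinarith)
  have hpt : pt (k*k+j) = ((k:ℤ), (j:ℤ)) := by
    rw [pt_val hs]; unfold ptAux; rw [if_pos hj]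
  have hn : ((k*k+j : ℕ) : ℤ) = (k:ℤ)*k + j := by push_cast; ring
  rw [Bsum_eq_nbrs, hpt]
  simp only
  have v2 : ind (k*k+j) ((k:ℤ)+1, (j:ℤ)) = 0 := by
    apply ind_big; unfold idx; rw [if_pos (by simp only; push_cast; omega), hn]
    simp only; push_cast; nlinarith
  have v4 : ind (k*k+j) ((k:ℤ), (j:ℤ)+1) = 0 := by
    apply ind_big; unfold idx; rw [hn]
    by_cases hc : (j:ℤ)+1 ≤ (k:ℤ)
    · rw [if_pos (by simp only; omega)]; simp only; nlinarith
    · rw [if_neg (by simp only; omega)]; simp only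
      have hjk : (j:ℤ) = k := by push_cast at hc ⊢; omega
      rw [hjk]; ring_nf; nlinarith [sq_nonneg ((k:ℤ))]
  have v1 : ind (k*k+j) ((k:ℤ)-1, (j:ℤ)) = (if j + 1 ≤ k then 1 else 0) := by
    by_cases hc : j + 1 ≤ k
    · rw [if_pos hc]
      apply ind_pos (by simp only; push_cast; omega) (by simp only; positivity)
      unfold idx; rw [if_pos (by simp only; push_cast; omega), hn]
      simp only; push_cast; nlinarith
    · rw [if_neg hc]
      have hjk : j = k := by omega
      subst hjk
      by_cases hk : j = 0
      · subst hk; apply ind_neg_x; norm_num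
      · apply ind_big; unfold idx
        rw [if_neg (by simp only; push_cast; omega), hn]
        simp only; push_cast; nlinarith
  have v3 : ind (k*k+j) ((k:ℤ), (j:ℤ)-1) = (if 1 ≤ j then 1 else 0) := by
    by_cases hc : 1 ≤ j
    · rw [if_pos hc]
      apply ind_pos (by simp only; positivity) (by simp only; push_cast; omega)
      unfold idx; rw [if_pos (by simp only; push_cast; omega), hn]
      simp only; push_cast; nlinarith
    · rw [if_neg hc]; apply ind_neg_y; simp only; push_cast; omega
  rw [v1, v2, v3, v4]; ring

lemma Bsum_row {k j : ℕ} (hjk : k < j) (hj : j ≤ 2*k) : Bsum (k*k+j) = 2 := by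
  have hk1 : 1 ≤ k := by omega
  have hs : Nat.sqrt (k*k+j) = k := sqrt_eq_of (by omega) (by nlinarith)
  have hpt : pt (k*k+j) = (2*(k:ℤ) - (j:ℤ), (k:ℤ)) := by
    rw [pt_val hs]; unfold ptAux; rw [if_neg (by omega)]
  have hn : ((k*k+j : ℕ) : ℤ) = (k:ℤ)*k + j := by push_cast; ring
  rw [Bsum_eq_nbrs, hpt]
  simp only
  set x : ℤ := 2*(k:ℤ) - (j:ℤ) with hx
  have hx0 : 0 ≤ x := by push_cast [hx]; omega
  have hxk : x ≤ (k:ℤ) - 1 := by push_cast [hx]; omega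
  have v1 : ind (k*k+j) (x - 1, (k:ℤ)) = 0 := by
    by_cases hc : x = 0
    · apply ind_neg_x; simp only; omega
    · apply ind_big; unfold idx
      rw [if_neg (by simp only; omega), hn]
      simp only [hx]; push_cast; nlinarith
  have v2 : ind (k*k+j) (x + 1, (k:ℤ)) = 1 := by
    apply ind_pos (by simp only; omega) (by simp only; positivity)
    unfold idx; rw [hn]
    by_cases hc : (k:ℤ) ≤ x + 1
    · rw [if_pos (by simp only; omega)]
      have hxe : x + 1 = (k:ℤ) := by omega
      simp only [hxe]
      have : (j:ℤ) ≥ k + 1 := by push_cast; omega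
      nlinarith
    · rw [if_neg (by simp only; omega)]
      simp only [hx]; push_cast; nlinarith
  have v3 : ind (k*k+j) (x, (k:ℤ) - 1) = 1 := by
    apply ind_pos (by simp only; omega) (by simp only; push_cast; omega)
    unfold idx; rw [hn]
    by_cases hc : (k:ℤ) - 1 ≤ x
    · rw [if_pos (by simp only; omega)]
      have hxe : x = (k:ℤ) - 1 := by omega
      simp only [hxe]
      have : (j:ℤ) ≥ k + 1 := by push_cast; omega
      nlinarith
    · rw [if_neg (by simp only; omega)]
      simp only [hx]
      have : (j:ℤ) ≥ k + 1 := by push_cast; omega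
      nlinarith
  have v4 : ind (k*k+j) (x, (k:ℤ) + 1) = 0 := by
    apply ind_big; unfold idx
    rw [if_neg (by simp only; omega), hn]
    simp only
    have : (j:ℤ) ≤ 2*k := by push_cast; omega
    nlinarith
  rw [v1, v2, v3, v4]; norm_num

/-! ### the edge-count formula -/

def cc (n : ℕ) : ℤ := 2*(Nat.sqrt n : ℤ) +
  (if n = Nat.sqrt n * Nat.sqrt n then 0
   else if n ≤ Nat.sqrt n * Nat.sqrt n + Nat.sqrt n then 1 else 2)

def Ecnt (n : ℕ) : ℤ := 2*n - cc n

lemma cc_eval {k j : ℕ} (hj : j ≤ 2*k) :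
    cc (k*k+j) = 2*k + (if j = 0 then 0 else if j ≤ k then 1 else 2) := by
  have hs : Nat.sqrt (k*k+j) = k := sqrt_eq_of (by omega) (by nlinarith)
  unfold cc
  rw [hs]
  obtain ⟨K, hK⟩ : ∃ K, k*k = K := ⟨_, rfl⟩
  rw [hK]
  split_ifs <;> omega

lemma decomp (n : ℕ) : ∃ k j : ℕ, n = k*k+j ∧ j ≤ 2*k := by
  obtain ⟨h1, h2⟩ := sqrt_facts n
  exact ⟨Nat.sqrt n, n - Nat.sqrt n * Nat.sqrt n, by omega, by omega⟩

lemma step (n : ℕ) : Ecnt (n+1) = Ecnt n + Bsum n := by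
  obtain ⟨k, j, rfl, hj⟩ := decomp n
  by_cases hcol : j ≤ k
  · rw [Bsum_col hcol]
    unfold Ecnt
    by_cases hk : k = 0
    · subst hk
      have hj0 : j = 0 := by omega
      subst hj0
      have e1 : (0*0+0 : ℕ)+1 = 1*1+0 := by norm_num
      rw [e1, cc_eval (by omega), cc_eval (by omega)]
      norm_num
    · have e1 : (k*k+j : ℕ)+1 = k*k+(j+1) := by omega
      rw [e1, cc_eval (by omega), cc_eval hj]
      obtain ⟨K, hK⟩ : ∃ K, k*k = K := ⟨_, rfl⟩
      rw [hK]
      push_cast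
      split_ifs <;> omega
  · rw [Bsum_row (by omega) hj]
    unfold Ecnt
    by_cases hlast : j = 2*k
    · subst hlast
      have e1 : (k*k+2*k : ℕ)+1 = (k+1)*(k+1)+0 := by ring
      rw [e1, cc_eval (by omega), cc_eval (by omega)]
      rw [show (k+1)*(k+1)+0 = k*k+(2*k+1) from by ring]
      obtain ⟨K, hK⟩ : ∃ K, k*k = K := ⟨_, rfl⟩
      rw [hK]
      push_cast
      split_ifs <;> omega
    · have e1 : (k*k+j : ℕ)+1 = k*k+(j+1) := by omega
      rw [e1, cc_eval (by omega), cc_eval hj]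
      obtain ⟨K, hK⟩ : ∃ K, k*k = K := ⟨_, rfl⟩
      rw [hK]
      push_cast
      split_ifs <;> omega

def Ssum (n : ℕ) : ℤ := ∑ i ∈ Finset.range n, ∑ j ∈ Finset.range n,
  if i ≠ j ∧ adj (pt i) (pt j) then 1 else 0

lemma Ssum_eq (n : ℕ) : Ssum n = 2 * Ecnt n := by
  induction n with
  | zero => simp [Ssum, Ecnt, cc]
  | succ n ih =>
    have hstep : Ssum (n+1) = Ssum n + 2 * Bsum n := by
      unfold Ssum
      rw [Finset.sum_range_succ]
      have h1 : ∀ i ∈ Finset.range n,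
          (∑ j ∈ Finset.range (n+1), if i ≠ j ∧ adj (pt i) (pt j) then (1:ℤ) else 0) =
          (∑ j ∈ Finset.range n, if i ≠ j ∧ adj (pt i) (pt j) then (1:ℤ) else 0) +
          (if adj (pt i) (pt n) then 1 else 0) := by
        intro i hi
        rw [Finset.sum_range_succ]
        congr 1
        simp only [Finset.mem_range] at hi
        have : i ≠ n := by omega
        simp [this]
      rw [Finset.sum_congr rfl h1, Finset.sum_add_distrib]
      have h2 : (∑ j ∈ Finset.range (n+1), if n ≠ j ∧ adj (pt n) (pt j) then (1:ℤ) else 0) =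
          Bsum n := by
        rw [Finset.sum_range_succ]
        simp only [ne_eq, not_true_eq_false, false_and, if_false, add_zero]
        unfold Bsum
        apply Finset.sum_congr rfl
        intro j hj
        simp only [Finset.mem_range] at hj
        have hne : n ≠ j := by omega
        by_cases ha : adj (pt j) (pt n)
        · rw [if_pos ha, if_pos ⟨hne, adj_symm ha⟩]
        · rw [if_neg ha, if_neg]
          rintro ⟨-, h'⟩
          exact ha (adj_symm h')
      rw [h2]
      unfold Bsum
      ring
    rw [hstep, ih, step]
    ring

lemma cc_nonneg (n : ℕ) : 0 ≤ cc n := by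
  unfold cc; split_ifs <;> omega

lemma cc_sq_bounds (n : ℕ) (hn : n ≠ 0) : 4*(n:ℤ) ≤ cc n ^ 2 ∧ (cc n - 1)^2 < 4*n := by
  obtain ⟨k, j, rfl, hj⟩ := decomp n
  rw [cc_eval hj]
  by_cases h0 : j = 0
  · subst h0
    rw [if_pos rfl]
    have hk : k ≠ 0 := by rintro rfl; omega
    have h1k : 1 ≤ (k:ℤ) := by exact_mod_cast Nat.one_le_iff_ne_zero.mpr hk
    constructor
    · push_cast; nlinarith
    · push_cast; nlinarith
  · rw [if_neg h0]
    by_cases h1 : j ≤ k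
    · rw [if_pos h1]
      have hj1 : 1 ≤ (j:ℤ) := by exact_mod_cast Nat.one_le_iff_ne_zero.mpr h0
      have hjk : (j:ℤ) ≤ k := by exact_mod_cast h1
      constructor <;> push_cast <;> nlinarith
    · rw [if_neg h1]
      have hjk : (k:ℤ) + 1 ≤ j := by push_cast at *; omega
      have hj2 : (j:ℤ) ≤ 2*k := by exact_mod_cast hj
      constructor <;> push_cast <;> nlinarith

lemma floor_beta' (n : ℕ) : ⌊2*(n:ℝ) - 2*Real.sqrt n⌋ = Ecnt n := by
  by_cases hn : n = 0
  · subst hn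
    simp [Ecnt, cc]
  obtain ⟨hub, hlb⟩ := cc_sq_bounds n hn
  have hcc := cc_nonneg n
  have hsn : (1:ℝ) ≤ Real.sqrt n := by
    rw [show (1:ℝ) = Real.sqrt 1 from (Real.sqrt_one).symm]
    apply Real.sqrt_le_sqrt
    exact_mod_cast Nat.one_le_iff_ne_zero.mpr hn
  rw [Int.floor_eq_iff]
  constructor
  · have h1 : 2 * Real.sqrt n ≤ (cc n : ℝ) := by
      have e : 2 * Real.sqrt n = Real.sqrt (4*n) := by
        rw [show (4:ℝ)*n = 2^2*(n:ℝ) from by ring, Real.sqrt_mul (by positivity),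
          Real.sqrt_sq (by norm_num)]
      rw [e]
      calc Real.sqrt (4*(n:ℝ)) ≤ Real.sqrt ((cc n : ℝ)^2) := by
            apply Real.sqrt_le_sqrt
            calc (4*(n:ℝ)) = ((4*(n:ℤ) : ℤ) : ℝ) := by push_cast; ring
              _ ≤ ((cc n ^2 : ℤ) : ℝ) := by exact_mod_cast hub
              _ = (cc n : ℝ)^2 := by push_cast; ring
        _ = (cc n : ℝ) := Real.sqrt_sq (by exact_mod_cast hcc)
    unfold Ecnt
    push_cast
    linarith
  · have h2 : (cc n : ℝ) - 1 < 2 * Real.sqrt n := by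
      rcases le_or_gt ((cc n : ℝ) - 1) 0 with hc | hc
      · linarith
      · have hsq : ((cc n : ℝ) - 1)^2 < (2 * Real.sqrt n)^2 := by
          rw [mul_pow, Real.sq_sqrt (by positivity)]
          calc ((cc n : ℝ) - 1)^2 = (((cc n - 1)^2 : ℤ) : ℝ) := by push_cast; ring
            _ < ((4*(n:ℤ) : ℤ) : ℝ) := by exact_mod_cast hlb
            _ = (2:ℝ)^2 * n := by push_cast; ring
        nlinarith [Real.sqrt_nonneg (n:ℝ)]
    unfold Ecnt
    push_cast
    linarith

/-! ### geometry -/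

noncomputable def mk2 (a b : ℝ) : Pt := (WithLp.equiv 2 (Fin 2 → ℝ)).symm ![a, b]

lemma dist_mk2 (a b c d : ℝ) : dist (mk2 a b) (mk2 c d) = Real.sqrt ((a-c)^2 + (b-d)^2) := by
  rw [EuclideanSpace.dist_eq]
  congr 1
  rw [Fin.sum_univ_two]
  simp [mk2, Real.dist_eq, sq_abs]

noncomputable def posn (m : ℕ) : Pt := mk2 ((pt m).1 : ℝ) ((pt m).2 : ℝ)

def sqd (i j : ℕ) : ℤ := ((pt i).1 - (pt j).1)^2 + ((pt i).2 - (pt j).2)^2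

lemma sqd_nonneg (i j : ℕ) : 0 ≤ sqd i j := by unfold sqd; positivity

lemma dist_posn (i j : ℕ) : dist (posn i) (posn j) = Real.sqrt ((sqd i j : ℤ) : ℝ) := by
  unfold posn
  rw [dist_mk2]
  congr 1
  unfold sqd
  push_cast
  ring

lemma sqd_pos {i j : ℕ} (hij : i ≠ j) : 1 ≤ sqd i j := by
  have h0 : sqd i j ≠ 0 := by
    unfold sqd
    intro h
    apply hij
    apply pt_inj
    have h1 : (pt i).1 = (pt j).1 := by nlinarith [sq_nonneg ((pt i).1 - (pt j).1), sq_nonneg ((pt i).2 - (pt j).2)]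
    have h2 : (pt i).2 = (pt j).2 := by nlinarith [sq_nonneg ((pt i).1 - (pt j).1), sq_nonneg ((pt i).2 - (pt j).2)]
    exact Prod.ext h1 h2
  have := sqd_nonneg i j
  omega

def chg (m : ℕ) : ℤ := if Even ((pt m).1 + (pt m).2) then 1 else -1

lemma chg_parity {i j : ℕ} : chg i = chg j ↔ Even (sqd i j) := by
  unfold chg sqd
  obtain ⟨a, b⟩ := pt i
  obtain ⟨c, d⟩ := pt j
  simp only
  have hsq : ∀ x : ℤ, (Even (x^2) ↔ Even x) := fun x => by simp [Int.even_pow]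
  have key : Even ((a-c)^2+(b-d)^2) ↔ (Even (a+b) ↔ Even (c+d)) := by
    rw [Int.even_add, hsq, hsq, Int.even_sub, Int.even_sub, Int.even_add, Int.even_add]
    tauto
  rw [key]
  by_cases h1 : Even (a+b) <;> by_cases h2 : Even (c+d) <;>
    simp only [h1, h2, if_true, if_false] <;>
    constructor <;> intro hh <;> first | tauto | omega | (exfalso; omega) | (exfalso; tauto)

lemma adj_iff_sqd (i j : ℕ) : adj (pt i) (pt j) ↔ sqd i j = 1 := Iff.rfl

open Real in
lemma sin_pi7_gt : (0.42 : ℝ) < Real.sin (π / 7) := by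
  have hpl : (3.14 : ℝ) < π := by linarith [Real.pi_gt_d6]
  have hpu : π < (3.15 : ℝ) := Real.pi_lt_d2
  have hx1 : (0.4485 : ℝ) < π / 7 := by linarith
  have hx2 : π / 7 < (0.45 : ℝ) := by linarith
  have h := Real.sin_gt_sub_cube (by linarith : (0:ℝ) < π/7)
  have hc : (π/7)^3 ≤ (0.45:ℝ)^3 := pow_le_pow_left₀ (by linarith) hx2.le 3
  nlinarith

open Real in
lemma r0_lt_sqrt2 {r₀ : ℝ} (hub : r₀ < (2 * Real.sin (π / 7))⁻¹) : r₀ < Real.sqrt 2 := by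
  have hs := sin_pi7_gt
  have h1 : (2 * Real.sin (π/7))⁻¹ ≤ (0.84 : ℝ)⁻¹ := by
    apply inv_anti₀ (by norm_num)
    linarith
  have h2 : (0.84 : ℝ)⁻¹ < Real.sqrt 2 := by
    have h3 : (1.2 : ℝ) < Real.sqrt 2 := by
      apply (Real.lt_sqrt (by norm_num)).mpr
      norm_num
    have : (0.84 : ℝ)⁻¹ < 1.2 := by norm_num
    linarith
  linarith

lemma Ssum_fin (n : ℕ) : (∑ i : Fin n, ∑ j : Fin n,
    if (i:ℕ) ≠ (j:ℕ) ∧ adj (pt (i:ℕ)) (pt (j:ℕ)) then (-1:ℤ) else 0) = -(Ssum n) := by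
  unfold Ssum
  rw [← Finset.sum_neg_distrib]
  rw [Finset.sum_range (f := fun i => -∑ j ∈ Finset.range n,
    if i ≠ j ∧ adj (pt i) (pt j) then (1:ℤ) else 0)]
  apply Finset.sum_congr rfl
  intro i _
  rw [← Finset.sum_neg_distrib]
  rw [Finset.sum_range (f := fun j => -(if (i:ℕ) ≠ j ∧ adj (pt (i:ℕ)) (pt j) then (1:ℤ) else 0))]
  apply Finset.sum_congr rfl
  intro j _
  split_ifs <;> norm_num

lemma coe_sum_ereal {α} (s : Finset α) (f : α → ℝ) :
    ((∑ i ∈ s, f i : ℝ) : EReal) = ∑ i ∈ s, ((f i : ℝ) : EReal) :=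
  map_sum (⟨⟨(Real.toEReal), EReal.coe_zero⟩, EReal.coe_add⟩ : ℝ →+ EReal) f s

end UBC

/-- For every `n` there is a configuration, subset of the square lattice with
alternating charge distribution, of energy `-⌊2n - 2√n⌋`; in particular the minimal energy
is at most `-⌊2n - 2√n⌋`. -/
theorem upper_bound_construction (r₀ : ℝ) (Va Vr : ℝ → EReal)
    (h : PotentialAssumptions r₀ Va Vr) (n : ℕ) :
    (∃ C : Config n, Set.range C.x ⊆ squareLattice ∧ AlternatingCharges r₀ C ∧
      energy Va Vr C = (((-(⌊beta n⌋ : ℤ) : ℝ)) : EReal)) ∧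
    sInf ((fun C : Config n => energy Va Vr C) '' Set.univ)
      ≤ (((-(⌊beta n⌋ : ℤ) : ℝ)) : EReal) := by
  classical
  have hr2 : r₀ < Real.sqrt 2 := UBC.r0_lt_sqrt2 h.r₀_ub
  -- the configuration
  set C : Config n :=
    { x := fun i => UBC.posn i.val
      q := fun i => UBC.chg i.val
      hq := fun i => by
        by_cases hE : Even ((UBC.pt i.val).1 + (UBC.pt i.val).2) <;>
          simp [UBC.chg, hE] } with hC
  -- distance facts
  have hdist : ∀ i j : Fin n, dist (C.x i) (C.x j)
      = Real.sqrt ((UBC.sqd i.val j.val : ℤ) : ℝ) := fun i j => UBC.dist_posn i.val j.val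
  have hsame : ∀ i j : Fin n, i ≠ j → C.q i = C.q j →
      Real.sqrt 2 ≤ dist (C.x i) (C.x j) := by
    intro i j hij hq
    have hiv : i.val ≠ j.val := fun hh => hij (Fin.ext hh)
    have hpar : Even (UBC.sqd i.val j.val) := UBC.chg_parity.mp hq
    have hpos : 1 ≤ UBC.sqd i.val j.val := UBC.sqd_pos hiv
    have h2 : 2 ≤ UBC.sqd i.val j.val := by
      rcases hpar with ⟨t, ht⟩; omega
    rw [hdist]
    apply Real.sqrt_le_sqrt
    exact_mod_cast h2
  have hdiff : ∀ i j : Fin n, i ≠ j → C.q i ≠ C.q j →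
      (UBC.sqd i.val j.val = 1 ∧ dist (C.x i) (C.x j) = 1) ∨
      (UBC.sqd i.val j.val ≠ 1 ∧ r₀ < dist (C.x i) (C.x j)) := by
    intro i j hij hq
    have hiv : i.val ≠ j.val := fun hh => hij (Fin.ext hh)
    have hpos : 1 ≤ UBC.sqd i.val j.val := UBC.sqd_pos hiv
    by_cases h1 : UBC.sqd i.val j.val = 1
    · left
      refine ⟨h1, ?_⟩
      rw [hdist, h1]
      norm_num
    · right
      refine ⟨h1, ?_⟩
      have hodd : ¬ Even (UBC.sqd i.val j.val) := fun he => hq (UBC.chg_parity.mpr he)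
      have h3 : 3 ≤ UBC.sqd i.val j.val := by
        rcases Int.even_or_odd (UBC.sqd i.val j.val) with he | ⟨t, ht⟩
        · exact absurd he hodd
        · omega
      rw [hdist]
      calc r₀ < Real.sqrt 2 := hr2
        _ ≤ Real.sqrt ((UBC.sqd i.val j.val : ℤ) : ℝ) := by
            apply Real.sqrt_le_sqrt
            have : (3:ℝ) ≤ ((UBC.sqd i.val j.val : ℤ) : ℝ) := by exact_mod_cast h3
            linarith
  -- energy computation
  have henergy : energy Va Vr C = (((-(⌊beta n⌋ : ℤ) : ℝ)) : EReal) := by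
    unfold energy
    have hrep : (∑ i : Fin n, ∑ j : Fin n,
        if i ≠ j ∧ C.q i = C.q j then Vr (dist (C.x i) (C.x j)) else 0) = 0 := by
      apply Finset.sum_eq_zero
      intro i _
      apply Finset.sum_eq_zero
      intro j _
      split_ifs with hc
      · exact (h.vr_zero_iff _).mpr (hsame i j hc.1 hc.2)
      · rfl
    have hatt : (∑ i : Fin n, ∑ j : Fin n,
        if i ≠ j ∧ C.q i ≠ C.q j then Va (dist (C.x i) (C.x j)) else 0)
        = (((-(UBC.Ssum n) : ℤ) : ℝ) : EReal) := by
      have hterm : ∀ i j : Fin n,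
          (if i ≠ j ∧ C.q i ≠ C.q j then Va (dist (C.x i) (C.x j)) else 0)
          = (((if i.val ≠ j.val ∧ UBC.adj (UBC.pt i.val) (UBC.pt j.val)
              then (-1 : ℤ) else 0 : ℤ) : ℝ) : EReal) := by
        intro i j
        by_cases hc : i ≠ j ∧ C.q i ≠ C.q j
        · rw [if_pos hc]
          rcases hdiff i j hc.1 hc.2 with ⟨h1, hd⟩ | ⟨h1, hd⟩
          · rw [if_pos ⟨fun hh => hc.1 (Fin.ext hh), (UBC.adj_iff_sqd _ _).mpr h1⟩, hd,
              h.va_one]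
            norm_num
          · rw [if_neg, h.va_zero _ hd]
            · norm_num
            · rintro ⟨-, ha⟩
              exact h1 ((UBC.adj_iff_sqd _ _).mp ha)
        · rw [if_neg hc]
          rw [if_neg]
          · norm_num
          · rintro ⟨hne, ha⟩
            apply hc
            have hij : i ≠ j := fun hh => hne (by rw [hh])
            refine ⟨hij, ?_⟩
            intro hqq
            have heven : Even (UBC.sqd i.val j.val) := UBC.chg_parity.mp hqq
            have h1 : UBC.sqd i.val j.val = 1 := (UBC.adj_iff_sqd _ _).mp ha
            rw [h1] at heven
            exact (Int.not_odd_iff_even.mpr heven) odd_one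
      calc (∑ i : Fin n, ∑ j : Fin n,
          if i ≠ j ∧ C.q i ≠ C.q j then Va (dist (C.x i) (C.x j)) else 0)
          = ∑ i : Fin n, ∑ j : Fin n, (((if i.val ≠ j.val ∧
              UBC.adj (UBC.pt i.val) (UBC.pt j.val) then (-1:ℤ) else 0 : ℤ) : ℝ) : EReal) := by
            exact Finset.sum_congr rfl fun i _ => Finset.sum_congr rfl fun j _ => hterm i j
        _ = (((∑ i : Fin n, ∑ j : Fin n, (if i.val ≠ j.val ∧
              UBC.adj (UBC.pt i.val) (UBC.pt j.val) then (-1:ℤ) else 0 : ℤ) : ℤ) : ℝ) : EReal) := by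
            rw [Int.cast_sum, UBC.coe_sum_ereal]
            apply Finset.sum_congr rfl
            intro i _
            rw [Int.cast_sum, UBC.coe_sum_ereal]
        _ = (((-(UBC.Ssum n) : ℤ) : ℝ) : EReal) := by
            congr 2
            exact UBC.Ssum_fin n
    rw [hrep, hatt, mul_zero, zero_add, ← EReal.coe_mul]
    congr 1
    have hfloor : (⌊beta n⌋ : ℤ) = UBC.Ecnt n := by
      unfold beta
      exact UBC.floor_beta' n
    rw [hfloor]
    have := UBC.Ssum_eq n
    push_cast [this]
    ring
  refine ⟨⟨C, ?_, ?_, henergy⟩, ?_⟩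
  · -- square lattice
    rintro p ⟨i, rfl⟩
    exact ⟨⟨(UBC.pt i.val).1, rfl⟩, ⟨(UBC.pt i.val).2, rfl⟩⟩
  · -- alternating charges
    intro i j hadj hq
    obtain ⟨hne, hle⟩ := hadj
    have hij : i ≠ j := fun hh => hne (by rw [hh])
    have := hsame i j hij hq
    linarith
  · -- the infimum bound
    rw [← henergy]
    apply sInf_le
    exact ⟨C, Set.mem_univ C, rfl⟩
end

section
/- Let C_n be an optimal configuration, i.e., E(C_n) = E^n_min(Q(C_n)). Then C_n has alternating charge distribution (no atom is bonded to an atom of the same charge), every bond angle θ satisfies 2π/5 ≤ θ ≤ 8π/5, and every atom has at most 4 neighbors, i.e., #N(x_i) ≤ 4 for all i ∈ {1,…,n}. -/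
open scoped BigOperators
open Real

section CrystAux
open Real

/-! ### Numeric lemmas -/

lemma sin7_lb : (1/4 : ℝ) < Real.sin (Real.pi/7) := by
  have h := Real.mul_le_sin (x := Real.pi/7) (by positivity)
    (by nlinarith [Real.pi_gt_three])
  have he : (2:ℝ)/Real.pi * (Real.pi/7) = 2/7 := by field_simp
  nlinarith [he ▸ h]

lemma sin7_pos : 0 < Real.sin (Real.pi/7) := lt_trans (by norm_num) sin7_lb

lemma sin5_lb : (1/2 : ℝ) ≤ Real.sin (Real.pi/5) := by
  rw [← Real.sin_pi_div_six]
  apply Real.sin_le_sin_of_le_of_le_pi_div_two (by nlinarith [Real.pi_gt_three])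
    (by nlinarith [Real.pi_gt_three]) (by nlinarith [Real.pi_gt_three])

lemma cos5_mem : 0 ≤ Real.cos (2*Real.pi/5) ∧ Real.cos (2*Real.pi/5) ≤ 1/2 := by
  constructor
  · apply Real.cos_nonneg_of_mem_Icc
    constructor <;> nlinarith [Real.pi_gt_three, Real.pi_pos]
  · rw [← Real.cos_pi_div_three]
    apply Real.cos_le_cos_of_nonneg_of_le_pi (by positivity) (by nlinarith [Real.pi_pos])
      (by nlinarith [Real.pi_pos])

lemma sincos7 : (1:ℝ) ≤ 4 * Real.sin (Real.pi/7) * Real.cos (2*(Real.pi/7)) := by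
  have h3 : Real.sin (3*(Real.pi/7)) = 2 * Real.sin (Real.pi/7) * Real.cos (2*(Real.pi/7))
      + Real.sin (Real.pi/7) := by
    rw [show (3:ℝ)*(Real.pi/7) = 2*(Real.pi/7) + Real.pi/7 by ring, Real.sin_add,
      Real.sin_two_mul, Real.cos_two_mul]
    ring
  have h4 : Real.sin (3*(Real.pi/7)) = Real.cos (Real.pi/14) := by
    rw [← Real.sin_pi_div_two_sub]
    ring_nf
  have h5 : 1 - (Real.pi/14)^2/2 ≤ Real.cos (Real.pi/14) := Real.one_sub_sq_div_two_le_cos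
  have h6 : Real.sin (Real.pi/7) ≤ Real.pi/7 := Real.sin_le (by positivity)
  nlinarith [Real.pi_lt_d2, Real.pi_gt_three]

lemma two_sin_sq (x : ℝ) : 2 - 2 * Real.cos (2*x) = 4 * Real.sin x ^ 2 := by
  rw [Real.cos_two_mul']
  have := Real.sin_sq_add_cos_sq x
  linarith

lemma sqrt_two_le_two : Real.sqrt 2 ≤ 2 := by
  have h4 : Real.sqrt 4 = 2 := by
    rw [show (4:ℝ) = 2^2 by norm_num, Real.sqrt_sq (by norm_num)]
  calc Real.sqrt 2 ≤ Real.sqrt 4 := Real.sqrt_le_sqrt (by norm_num)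
    _ = 2 := h4

/-! ### Quadratic corner bounds -/

lemma quad_max {lo hi a k : ℝ} (h1 : lo ≤ a) (h2 : a ≤ hi) :
    a^2 + k*a ≤ max (lo^2 + k*lo) (hi^2 + k*hi) := by
  have hsq : a^2 ≤ (lo+hi)*a - lo*hi := by nlinarith
  rcases le_total 0 (lo + hi + k) with h | h
  · apply le_trans _ (le_max_right _ _); nlinarith
  · apply le_trans _ (le_max_left _ _); nlinarith

lemma corner5 {r₀ a b c : ℝ} (hr : 1 ≤ r₀) (ha1 : 1 ≤ a) (ha2 : a ≤ r₀)
    (hb1 : 1 ≤ b) (hb2 : b ≤ r₀) (hc0 : 0 ≤ c) (hc : c ≤ 1/2) :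
    a^2 + b^2 - 2*a*b*c ≤ 2*r₀^2*(1-c) := by
  have h1 := quad_max (k := -2*b*c) ha1 ha2
  have h2 := quad_max (k := -2*c) hb1 hb2
  have h3 := quad_max (k := -2*r₀*c) hb1 hb2
  have c11 : 2 - 2*c ≤ 2*r₀^2*(1-c) := by
    nlinarith [mul_nonneg (by nlinarith : (0:ℝ) ≤ r₀^2 - 1) (by linarith : (0:ℝ) ≤ 1 - c)]
  have c1r : 1 + r₀^2 - 2*r₀*c ≤ 2*r₀^2*(1-c) := by
    nlinarith [mul_nonneg (by linarith : (0:ℝ) ≤ r₀ - 1)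
      (by nlinarith : (0:ℝ) ≤ r₀ + 1 - 2*c*r₀)]
  rcases le_max_iff.1 h1 with h | h
  · rcases le_max_iff.1 h2 with h' | h' <;> nlinarith
  · rcases le_max_iff.1 h3 with h' | h' <;> nlinarith

lemma corner7 {r₀ a b c s : ℝ} (hr : 1 ≤ r₀) (ha1 : 1 ≤ a) (ha2 : a ≤ r₀)
    (hb1 : 1 ≤ b) (hb2 : b ≤ r₀) (hs0 : 0 ≤ s) (hcs : 2 - 2*c = 4*s^2)
    (hrs : 2*r₀*s < 1) (hrc : r₀ < 2*c) :
    a^2 + b^2 - 2*a*b*c < 1 := by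
  have h1 := quad_max (k := -2*b*c) ha1 ha2
  have h2 := quad_max (k := -2*c) hb1 hb2
  have h3 := quad_max (k := -2*r₀*c) hb1 hb2
  have hrs' : (2*r₀*s)^2 < 1 := by
    nlinarith [mul_nonneg (mul_nonneg (by norm_num : (0:ℝ) ≤ 2) (by linarith : (0:ℝ) ≤ r₀)) hs0]
  have c11 : 2 - 2*c < 1 := by nlinarith [sq_nonneg s, sq_nonneg (r₀*s)]
  have c1r : 1 + r₀^2 - 2*r₀*c < 1 := by nlinarith
  have crr : 2*r₀^2 - 2*r₀^2*c < 1 := by nlinarith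
  rcases le_max_iff.1 h1 with h | h
  · rcases le_max_iff.1 h2 with h' | h' <;> nlinarith
  · rcases le_max_iff.1 h3 with h' | h' <;> nlinarith

/-! ### Circular pigeonhole -/

lemma circle_pigeonhole {m : ℕ} (hm : 2 ≤ m) (θ : Fin m → ℝ)
    (hθ : ∀ i, θ i ∈ Set.Ioc (-Real.pi) Real.pi) :
    ∃ i j, i ≠ j ∧ Real.cos (2*Real.pi/m) ≤ Real.cos (θ i - θ j) := by
  by_contra hcon
  push_neg at hcon
  set δ := 2*Real.pi/m with hδ
  have hm0 : (0:ℝ) < m := by positivity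
  have hδpos : 0 < δ := by positivity
  have hm2 : (2:ℝ) ≤ m := by exact_mod_cast hm
  have hδπ : δ ≤ Real.pi := by
    rw [hδ, div_le_iff₀ hm0]
    nlinarith [Real.pi_pos]
  set σ := Tuple.sort θ with hσ
  have hmono : Monotone (θ ∘ σ) := Tuple.monotone_sort θ
  have key : ∀ i j : Fin m, i ≠ j → Real.cos (θ (σ i) - θ (σ j)) < Real.cos δ := by
    intro i j hij
    exact hcon (σ i) (σ j) (fun h => hij (σ.injective h))
  have gap : ∀ k : ℕ, ∀ hk : k + 1 < m, δ < θ (σ ⟨k+1, hk⟩) - θ (σ ⟨k, by omega⟩) := by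
    intro k hk
    have hle : θ (σ ⟨k, by omega⟩) ≤ θ (σ ⟨k+1, hk⟩) :=
      hmono (by simp [Fin.mk_le_mk])
    by_contra hle2
    push_neg at hle2
    have hge : Real.cos (θ (σ ⟨k+1, hk⟩) - θ (σ ⟨k, by omega⟩)) ≥ Real.cos δ :=
      Real.cos_le_cos_of_nonneg_of_le_pi (by linarith) hδπ (by linarith)
    have hlt := key ⟨k+1, hk⟩ ⟨k, by omega⟩ (by apply Fin.ne_of_val_ne; simp)
    linarith
  have hf : ∀ k : ℕ, min k (m-1) < m := fun k => by omega
  set f : ℕ → ℝ := fun k => θ (σ ⟨min k (m-1), hf k⟩) with hfdef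
  have htel : ∑ k ∈ Finset.range (m-1), (f (k+1) - f k) = f (m-1) - f 0 :=
    Finset.sum_range_sub f (m-1)
  have hgaps : ∀ k ∈ Finset.range (m-1), δ < f (k+1) - f k := by
    intro k hk
    rw [Finset.mem_range] at hk
    have hk1 : k + 1 < m := by omega
    have e1 : (⟨min (k+1) (m-1), hf (k+1)⟩ : Fin m) = ⟨k+1, hk1⟩ := by
      apply Fin.ext; simp only [Fin.val_mk]; omega
    have e2 : (⟨min k (m-1), hf k⟩ : Fin m) = ⟨k, by omega⟩ := by
      apply Fin.ext; simp only [Fin.val_mk]; omega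
    have := gap k hk1
    simp only [hfdef, e1, e2]
    exact this
  have hsum : (m-1 : ℕ) • δ < ∑ k ∈ Finset.range (m-1), (f (k+1) - f k) := by
    have hne : (Finset.range (m-1)).Nonempty := by
      rw [Finset.nonempty_range_iff]; omega
    calc (m-1:ℕ) • δ = ∑ _k ∈ Finset.range (m-1), δ := by
          rw [Finset.sum_const, Finset.card_range]
      _ < _ := Finset.sum_lt_sum_of_nonempty hne hgaps
  have hΔ : 2*Real.pi - δ < f (m-1) - f 0 := by
    have hid : ((m:ℝ) - 1) * δ = 2*Real.pi - δ := by
      have h2 : (m:ℝ) * δ = 2*Real.pi := by rw [hδ]; field_simp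
      rw [sub_mul, one_mul, h2]
    rw [htel] at hsum
    have hcast : ((m-1 : ℕ) : ℝ) = (m:ℝ) - 1 := by
      have h1 : (1:ℕ) ≤ m := by omega
      push_cast [Nat.cast_sub h1]; ring
    rw [nsmul_eq_mul, hcast, hid] at hsum
    linarith
  have h0 := hθ (σ ⟨min 0 (m-1), hf 0⟩)
  have hl := hθ (σ ⟨min (m-1) (m-1), hf (m-1)⟩)
  have hΔ2 : f (m-1) - f 0 < 2*Real.pi := by
    show θ (σ ⟨min (m-1) (m-1), hf (m-1)⟩) - θ (σ ⟨min 0 (m-1), hf 0⟩) < 2*Real.pi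
    have := h0.1; have := hl.2; linarith
  have hne2 : (⟨min (m-1) (m-1), hf (m-1)⟩ : Fin m) ≠ ⟨min 0 (m-1), hf 0⟩ := by
    apply Fin.ne_of_val_ne; simp only [Fin.val_mk]; omega
  have hkey := key _ _ hne2
  have hcos : Real.cos (f (m-1) - f 0) ≥ Real.cos δ := by
    have harg : f (m-1) - f 0 = 2*Real.pi - (2*Real.pi - (f (m-1) - f 0)) := by ring
    rw [harg, Real.cos_two_pi_sub]
    exact Real.cos_le_cos_of_nonneg_of_le_pi (by linarith) hδπ (by linarith)
  have : Real.cos (f (m-1) - f 0) < Real.cos δ := hkey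
  linarith

lemma complex_pigeonhole {m : ℕ} (hm : 2 ≤ m) (z : Fin m → ℂ) (hz : ∀ a, z a ≠ 0) :
    ∃ a b, a ≠ b ∧
      ‖z a‖ * ‖z b‖ * Real.cos (2*Real.pi/m) ≤
        (z a).re * (z b).re + (z a).im * (z b).im := by
  obtain ⟨a, b, hab, hcos⟩ := circle_pigeonhole hm (fun a => (z a).arg)
    (fun a => ⟨Complex.neg_pi_lt_arg _, Complex.arg_le_pi _⟩)
  refine ⟨a, b, hab, ?_⟩
  have hre : ∀ c, (z c).re = ‖z c‖ * Real.cos ((z c).arg) := by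
    intro c
    rw [Complex.cos_arg (hz c), mul_comm, div_mul_cancel₀ _ (norm_ne_zero_iff.2 (hz c))]
  have him : ∀ c, (z c).im = ‖z c‖ * Real.sin ((z c).arg) := by
    intro c
    rw [Complex.sin_arg, mul_comm, div_mul_cancel₀ _ (norm_ne_zero_iff.2 (hz c))]
  rw [hre a, hre b, him a, him b]
  have hcs : (z a).arg.cos * (z b).arg.cos + (z a).arg.sin * (z b).arg.sin
      = Real.cos ((z a).arg - (z b).arg) := (Real.cos_sub _ _).symm
  have habs : 0 ≤ ‖z a‖ * ‖z b‖ := by positivity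
  calc ‖z a‖ * ‖z b‖ * Real.cos (2*Real.pi/m)
      ≤ ‖z a‖ * ‖z b‖ * Real.cos ((z a).arg - (z b).arg) :=
        mul_le_mul_of_nonneg_left hcos habs
    _ = _ := by rw [← hcs]; ring

lemma pt_pigeonhole {m : ℕ} (hm : 2 ≤ m) (c : Pt) (p : Fin m → Pt)
    (hp : ∀ a, p a ≠ c) :
    ∃ a b, a ≠ b ∧ (dist (p a) (p b))^2 ≤
      (dist (p a) c)^2 + (dist (p b) c)^2
        - 2*((dist (p a) c)*(dist (p b) c)*Real.cos (2*Real.pi/m)) := by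
  set z : Fin m → ℂ := fun a => ⟨(p a - c) 0, (p a - c) 1⟩ with hz
  have hz0 : ∀ a, z a ≠ 0 := by
    intro a h
    apply hp a
    have h0 : (p a - c) 0 = 0 := congrArg Complex.re h
    have h1 : (p a - c) 1 = 0 := congrArg Complex.im h
    have hsub : p a - c = 0 := by
      ext t
      fin_cases t
      · simpa using h0
      · simpa using h1
    exact sub_eq_zero.1 hsub
  have habs : ∀ a, ‖z a‖ = dist (p a) c := by
    intro a
    rw [Complex.norm_def, dist_eq_norm, EuclideanSpace.norm_eq]
    congr 1
    rw [Fin.sum_univ_two]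
    simp [hz, Complex.normSq_apply, Real.norm_eq_abs, sq_abs]
    ring
  obtain ⟨a, b, hab, hineq⟩ := complex_pigeonhole hm z hz0
  refine ⟨a, b, hab, ?_⟩
  have hinner : (inner ℝ (p a - c) (p b - c) : ℝ)
      = (z a).re * (z b).re + (z a).im * (z b).im := by
    rw [PiLp.inner_apply, Fin.sum_univ_two]
    simp [hz, RCLike.inner_apply]
    ring
  have hns : dist (p a) (p b) ^2 = (dist (p a) c)^2 + (dist (p b) c)^2
      - 2 * (inner ℝ (p a - c) (p b - c) : ℝ) := by
    rw [dist_eq_norm, dist_eq_norm, dist_eq_norm]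
    have hdd : p a - p b = (p a - c) - (p b - c) := by abel
    rw [hdd, @norm_sub_sq_real]
    ring
  rw [hns, hinner]
  rw [habs a, habs b] at hineq
  linarith

end CrystAux

section ERealAux
open Real

/-- Coercion `ℝ → EReal` as an `AddMonoidHom`. -/
def erealCoe : ℝ →+ EReal where
  toFun := fun x => (x : EReal)
  map_zero' := rfl
  map_add' := fun a b => EReal.coe_add a b

@[simp] lemma erealCoe_apply (x : ℝ) : erealCoe x = (x : EReal) := rfl

lemma coe_finset_sum {α : Type*} (s : Finset α) (f : α → ℝ) :
    ((∑ a ∈ s, f a : ℝ) : EReal) = ∑ a ∈ s, ((f a : ℝ) : EReal) :=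
  map_sum erealCoe f s

lemma coe_le_finset_sum {α : Type*} (s : Finset α) (f : α → EReal) (lb : ℝ)
    (h : ∀ a ∈ s, ((lb : ℝ) : EReal) ≤ f a) :
    (((s.card : ℕ) • lb : ℝ) : EReal) ≤ ∑ a ∈ s, f a := by
  have h1 : ∑ a ∈ s, ((lb : ℝ) : EReal) ≤ ∑ a ∈ s, f a := Finset.sum_le_sum h
  have h2 : ∑ a ∈ s, ((lb : ℝ) : EReal) = (((s.card : ℕ) • lb : ℝ) : EReal) := by
    rw [Finset.sum_const]
    exact (map_nsmul erealCoe s.card lb).symm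
  rw [← h2]; exact h1

lemma finset_sum_ne_bot {α : Type*} (s : Finset α) (f : α → EReal) (lb : ℝ)
    (h : ∀ a ∈ s, ((lb : ℝ) : EReal) ≤ f a) : ∑ a ∈ s, f a ≠ ⊥ := by
  intro hbot
  have h1 := coe_le_finset_sum s f lb h
  rw [hbot, le_bot_iff] at h1
  exact EReal.coe_ne_bot _ h1

lemma finset_sum_eq_top {α : Type*} (s : Finset α) (f : α → EReal) (lb : ℝ)
    (h : ∀ a ∈ s, ((lb : ℝ) : EReal) ≤ f a) {a₀ : α} (ha₀ : a₀ ∈ s)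
    (htop : f a₀ = ⊤) : ∑ a ∈ s, f a = ⊤ := by
  classical
  rw [← Finset.add_sum_erase s f ha₀, htop]
  exact EReal.top_add_of_ne_bot
    (finset_sum_ne_bot _ f lb (fun a ha => h a (Finset.mem_of_mem_erase ha)))

lemma half_mul_ne_bot {x : EReal} (hx : x ≠ ⊥) : ((1/2 : ℝ) : EReal) * x ≠ ⊥ := by
  induction x using EReal.rec with
  | bot => exact absurd rfl hx
  | coe r => rw [← EReal.coe_mul]; exact EReal.coe_ne_bot _
  | top => rw [EReal.coe_mul_top_of_pos (by norm_num)]; exact bot_lt_top.ne'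

end ERealAux

section ConfigAux
open Real

variable {r₀ : ℝ} {Va Vr : ℝ → EReal}

lemma vr_ge_zero (h : PotentialAssumptions r₀ Va Vr) (r : ℝ) : 0 ≤ Vr r := by
  rcases lt_or_ge r 1 with hr | hr
  · rw [h.vr_inf r hr]; exact le_top
  · exact h.vr_nonneg r hr

lemma va_ge_neg_one (h : PotentialAssumptions r₀ Va Vr) (r : ℝ) :
    ((-1 : ℝ) : EReal) ≤ Va r := by
  rcases eq_or_ne r 1 with hr | hr
  · rw [hr, h.va_one]
  · exact (h.va_gt r hr).le

lemma neg_one_le_zero_ereal : ((-1 : ℝ) : EReal) ≤ 0 := by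
  rw [show (0 : EReal) = ((0:ℝ) : EReal) from rfl]
  exact EReal.coe_le_coe_iff.2 (by norm_num)

lemma r0_lt_two (h : PotentialAssumptions r₀ Va Vr) : r₀ < 2 := by
  have h1 : (1:ℝ)/2 ≤ 2 * Real.sin (Real.pi/7) := by linarith [sin7_lb]
  have h2 : (2 * Real.sin (Real.pi/7))⁻¹ ≤ ((1:ℝ)/2)⁻¹ := by
    apply inv_anti₀ (by norm_num) h1
  calc r₀ < (2 * Real.sin (Real.pi/7))⁻¹ := h.r₀_ub
    _ ≤ ((1:ℝ)/2)⁻¹ := h2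
    _ = 2 := by norm_num

/-- Build a configuration with given charges and zero energy. -/
lemma exists_zero_energy (h : PotentialAssumptions r₀ Va Vr) {n : ℕ}
    (q : Fin n → ℤ) (hq : ∀ i, q i = 1 ∨ q i = -1) :
    ∃ C' : Config n, C'.q = q ∧ energy Va Vr C' = 0 := by
  refine ⟨⟨fun j => ((2 * (j:ℕ) : ℝ)) • EuclideanSpace.single (0 : Fin 2) (1:ℝ), q, hq⟩,
    rfl, ?_⟩
  have hdist : ∀ i j : Fin n, i ≠ j →
      (2:ℝ) ≤ dist (((2 * (i:ℕ) : ℝ)) • EuclideanSpace.single (0 : Fin 2) (1:ℝ))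
        (((2 * (j:ℕ) : ℝ)) • EuclideanSpace.single (0 : Fin 2) (1:ℝ)) := by
    intro i j hij
    rw [dist_eq_norm, ← sub_smul, norm_smul, Real.norm_eq_abs,
      EuclideanSpace.norm_single, norm_one, mul_one]
    have hne : (i.val : ℤ) - (j.val : ℤ) ≠ 0 := by
      intro hc
      exact hij (Fin.ext (by omega))
    have h1 : (1:ℤ) ≤ |(i.val : ℤ) - (j.val : ℤ)| := Int.one_le_abs hne
    have h1' : (1:ℝ) ≤ |(i.val : ℝ) - (j.val : ℝ)| := by exact_mod_cast h1
    have : |2 * (i.val:ℝ) - 2 * (j.val:ℝ)| = 2 * |(i.val : ℝ) - (j.val : ℝ)| := by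
      rw [show 2 * (i.val:ℝ) - 2 * (j.val:ℝ) = 2 * ((i.val:ℝ) - (j.val:ℝ)) by ring,
        abs_mul]
      norm_num
    rw [this]
    linarith
  show ((1/2 : ℝ) : EReal) * _ + ((1/2 : ℝ) : EReal) * _ = 0
  have hs1 : (∑ i : Fin n, ∑ j : Fin n,
      if i ≠ j ∧ q i = q j then
        Vr (dist (((2 * (i:ℕ) : ℝ)) • EuclideanSpace.single (0 : Fin 2) (1:ℝ))
          (((2 * (j:ℕ) : ℝ)) • EuclideanSpace.single (0 : Fin 2) (1:ℝ))) else 0)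
      = 0 := by
    apply Finset.sum_eq_zero; intro i _
    apply Finset.sum_eq_zero; intro j _
    by_cases hc : i ≠ j ∧ q i = q j
    · rw [if_pos hc, (h.vr_zero_iff _).2 (le_trans sqrt_two_le_two (hdist i j hc.1))]
    · rw [if_neg hc]
  have hs2 : (∑ i : Fin n, ∑ j : Fin n,
      if i ≠ j ∧ q i ≠ q j then
        Va (dist (((2 * (i:ℕ) : ℝ)) • EuclideanSpace.single (0 : Fin 2) (1:ℝ))
          (((2 * (j:ℕ) : ℝ)) • EuclideanSpace.single (0 : Fin 2) (1:ℝ))) else 0)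
      = 0 := by
    apply Finset.sum_eq_zero; intro i _
    apply Finset.sum_eq_zero; intro j _
    by_cases hc : i ≠ j ∧ q i ≠ q j
    · rw [if_pos hc, h.va_zero _ (lt_of_lt_of_le (r0_lt_two h) (hdist i j hc.1))]
    · rw [if_neg hc]
  rw [hs1, hs2, mul_zero, add_zero]

lemma energy_nonpos (h : PotentialAssumptions r₀ Va Vr) {n : ℕ} (C : Config n)
    (hC : IsOptimal Va Vr C) : energy Va Vr C ≤ 0 := by
  obtain ⟨C', hq', hE'⟩ := exists_zero_energy h C.q C.hq
  have hnet : netCharge C' = netCharge C := by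
    unfold netCharge; rw [hq']
  have hle : Emin Va Vr n (netCharge C) ≤ energy Va Vr C' :=
    sInf_le ⟨C', hnet, rfl⟩
  have hCeq : energy Va Vr C = Emin Va Vr n (netCharge C) := hC
  rw [hCeq]
  exact le_trans hle (le_of_eq hE')

lemma energy_top_of (h : PotentialAssumptions r₀ Va Vr) {n : ℕ} (C : Config n)
    {i j : Fin n} (hij : i ≠ j) (hd : dist (C.x i) (C.x j) < 1) :
    energy Va Vr C = ⊤ := by
  classical
  set T : Fin n → Fin n → EReal := fun i' j' =>
    if i' ≠ j' ∧ C.q i' = C.q j' then Vr (dist (C.x i') (C.x j')) else 0 with hT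
  set U : Fin n → Fin n → EReal := fun i' j' =>
    if i' ≠ j' ∧ C.q i' ≠ C.q j' then Va (dist (C.x i') (C.x j')) else 0 with hU
  have hT_ge : ∀ i' j', ((0:ℝ) : EReal) ≤ T i' j' := by
    intro i' j'
    simp only [hT]
    split
    · exact vr_ge_zero h _
    · exact le_refl _
  have hU_ge : ∀ i' j', ((-1:ℝ) : EReal) ≤ U i' j' := by
    intro i' j'
    simp only [hU]
    split
    · exact va_ge_neg_one h _
    · exact le_trans neg_one_le_zero_ereal (le_refl _)
  have hS1_ne_bot : (∑ i', ∑ j', T i' j') ≠ ⊥ := by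
    apply finset_sum_ne_bot _ _ ((n:ℕ) • (0:ℝ))
    intro a _
    apply le_trans _ (coe_le_finset_sum Finset.univ (T a) 0 (fun b _ => hT_ge a b))
    rw [Finset.card_univ, Fintype.card_fin]
  have hS2_ne_bot : (∑ i', ∑ j', U i' j') ≠ ⊥ := by
    apply finset_sum_ne_bot _ _ ((n:ℕ) • (-1:ℝ))
    intro a _
    apply le_trans _ (coe_le_finset_sum Finset.univ (U a) (-1) (fun b _ => hU_ge a b))
    rw [Finset.card_univ, Fintype.card_fin]
  show ((1/2 : ℝ) : EReal) * (∑ i', ∑ j', T i' j')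
      + ((1/2 : ℝ) : EReal) * (∑ i', ∑ j', U i' j') = ⊤
  by_cases hqq : C.q i = C.q j
  · have hTij : T i j = ⊤ := by
      simp only [hT]
      rw [if_pos ⟨hij, hqq⟩, h.vr_inf _ hd]
    have hrow : (∑ j', T i j') = ⊤ :=
      finset_sum_eq_top _ _ 0 (fun b _ => hT_ge i b) (Finset.mem_univ j) hTij
    have hS1 : (∑ i', ∑ j', T i' j') = ⊤ := by
      apply finset_sum_eq_top _ _ 0 _ (Finset.mem_univ i) hrow
      intro a _
      apply le_trans _ (coe_le_finset_sum Finset.univ (T a) 0 (fun b _ => hT_ge a b))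
      rw [Finset.card_univ, Fintype.card_fin]
      simp
    rw [hS1, EReal.coe_mul_top_of_pos (by norm_num)]
    exact EReal.top_add_of_ne_bot (half_mul_ne_bot hS2_ne_bot)
  · have hUij : U i j = ⊤ := by
      simp only [hU]
      rw [if_pos ⟨hij, hqq⟩, h.va_inf _ hd]
    have hrow : (∑ j', U i j') = ⊤ :=
      finset_sum_eq_top _ _ (-1) (fun b _ => hU_ge i b) (Finset.mem_univ j) hUij
    have hS2 : (∑ i', ∑ j', U i' j') = ⊤ := by
      apply finset_sum_eq_top _ _ ((n:ℕ) • (-1:ℝ)) _ (Finset.mem_univ i) hrow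
      intro a _
      apply le_trans _ (coe_le_finset_sum Finset.univ (U a) (-1) (fun b _ => hU_ge a b))
      rw [Finset.card_univ, Fintype.card_fin]
    rw [hS2, EReal.coe_mul_top_of_pos (by norm_num)]
    exact EReal.add_top_of_ne_bot (half_mul_ne_bot hS1_ne_bot)

lemma min_dist (h : PotentialAssumptions r₀ Va Vr) {n : ℕ} (C : Config n)
    (hC : IsOptimal Va Vr C) :
    ∀ i j : Fin n, i ≠ j → 1 ≤ dist (C.x i) (C.x j) := by
  intro i j hij
  by_contra hlt
  push_neg at hlt
  have htop := energy_top_of h C hij hlt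
  have hE := energy_nonpos h C hC
  rw [htop] at hE
  exact absurd hE (by simp)

end ConfigAux

section ConfigAux2
open Real

variable {r₀ : ℝ} {Va Vr : ℝ → EReal}

lemma energy_eq_coe (h : PotentialAssumptions r₀ Va Vr) {n : ℕ} (C : Config n)
    (hd : ∀ i j : Fin n, i ≠ j → 1 ≤ dist (C.x i) (C.x j)) :
    energy Va Vr C =
      ((((1/2) * ∑ i, ∑ j, (if i ≠ j ∧ C.q i = C.q j then
            (Vr (dist (C.x i) (C.x j))).toReal else 0)
        + (1/2) * ∑ i, ∑ j, (if i ≠ j ∧ C.q i ≠ C.q j then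
            (Va (dist (C.x i) (C.x j))).toReal else 0) : ℝ)) : EReal) := by
  have hs1 : (∑ i : Fin n, ∑ j : Fin n,
      if i ≠ j ∧ C.q i = C.q j then Vr (dist (C.x i) (C.x j)) else 0)
      = (((∑ i, ∑ j, (if i ≠ j ∧ C.q i = C.q j then
            (Vr (dist (C.x i) (C.x j))).toReal else 0) : ℝ)) : EReal) := by
    rw [coe_finset_sum]
    apply Finset.sum_congr rfl; intro i _
    rw [coe_finset_sum]
    apply Finset.sum_congr rfl; intro j _
    by_cases hc : i ≠ j ∧ C.q i = C.q j
    · rw [if_pos hc, if_pos hc]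
      have h1 : 1 ≤ dist (C.x i) (C.x j) := hd i j hc.1
      exact (EReal.coe_toReal (h.vr_fin _ h1).ne
        (lt_of_lt_of_le (by simp : (⊥:EReal) < 0) (vr_ge_zero h _)).ne').symm
    · rw [if_neg hc, if_neg hc]; rfl
  have hs2 : (∑ i : Fin n, ∑ j : Fin n,
      if i ≠ j ∧ C.q i ≠ C.q j then Va (dist (C.x i) (C.x j)) else 0)
      = (((∑ i, ∑ j, (if i ≠ j ∧ C.q i ≠ C.q j then
            (Va (dist (C.x i) (C.x j))).toReal else 0) : ℝ)) : EReal) := by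
    rw [coe_finset_sum]
    apply Finset.sum_congr rfl; intro i _
    rw [coe_finset_sum]
    apply Finset.sum_congr rfl; intro j _
    by_cases hc : i ≠ j ∧ C.q i ≠ C.q j
    · rw [if_pos hc, if_pos hc]
      have h1 : 1 ≤ dist (C.x i) (C.x j) := hd i j hc.1
      have hne_top : Va (dist (C.x i) (C.x j)) ≠ ⊤ :=
        (lt_of_le_of_lt (h.va_nonpos _ h1) (by simp)).ne
      have hne_bot : Va (dist (C.x i) (C.x j)) ≠ ⊥ :=
        (lt_of_lt_of_le (EReal.bot_lt_coe _) (va_ge_neg_one h _)).ne'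
      exact (EReal.coe_toReal hne_top hne_bot).symm
    · rw [if_neg hc, if_neg hc]; rfl
  show ((1/2 : ℝ) : EReal) * _ + ((1/2 : ℝ) : EReal) * _ = _
  rw [hs1, hs2, ← EReal.coe_mul, ← EReal.coe_mul, ← EReal.coe_add]

lemma row_col_diff {n : ℕ} (f f' : Fin n → Fin n → ℝ) (j : Fin n)
    (hsym : ∀ i k, f i k = f k i)
    (hoff : ∀ i k, i ≠ j → k ≠ j → f' i k = f i k)
    (hrow : ∀ k, f' j k = 0) (hcol : ∀ i, f' i j = 0)
    (hdiag : f j j = 0) :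
    ∑ i, ∑ k, f i k = (∑ i, ∑ k, f' i k) + 2 * ∑ k, f j k := by
  classical
  have key : ∀ i, i ≠ j → ∑ k, (f i k - f' i k) = f i j := by
    intro i hi
    rw [Finset.sum_eq_single j]
    · rw [hcol i, sub_zero]
    · intro k _ hk
      rw [hoff i k hi hk, sub_self]
    · intro hj; exact absurd (Finset.mem_univ j) hj
  have hrowj : ∑ k, (f j k - f' j k) = ∑ k, f j k := by
    apply Finset.sum_congr rfl
    intro k _; rw [hrow k, sub_zero]
  have main : ∑ i, ∑ k, (f i k - f' i k) = 2 * ∑ k, f j k := by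
    rw [← Finset.add_sum_erase _ _ (Finset.mem_univ j), hrowj]
    have he : ∑ i ∈ Finset.univ.erase j, ∑ k, (f i k - f' i k)
        = ∑ i ∈ Finset.univ.erase j, f i j := by
      apply Finset.sum_congr rfl
      intro i hi
      exact key i (Finset.ne_of_mem_erase hi)
    rw [he]
    have h2 : ∑ i ∈ Finset.univ.erase j, f i j = (∑ i, f i j) - f j j := by
      rw [← Finset.add_sum_erase _ (fun i => f i j) (Finset.mem_univ j)]; ring
    rw [h2, hdiag]
    have h3 : ∑ i, f i j = ∑ k, f j k := Finset.sum_congr rfl (fun i _ => hsym i j)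
    rw [h3]; ring
  have expand : ∑ i, ∑ k, (f i k - f' i k)
      = (∑ i, ∑ k, f i k) - ∑ i, ∑ k, f' i k := by
    rw [← Finset.sum_sub_distrib]
    apply Finset.sum_congr rfl
    intro i _
    rw [Finset.sum_sub_distrib]
  rw [expand] at main
  linarith

/-- Any atom has at most 6 points at distance in `[1,r₀]`, pairwise at distance `≥ 1`. -/
lemma card_le_six (h : PotentialAssumptions r₀ Va Vr) {n : ℕ} (x : Fin n → Pt) (c : Pt)
    (s : Finset (Fin n))
    (hs : ∀ k ∈ s, 1 ≤ dist (x k) c ∧ dist (x k) c ≤ r₀)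
    (hpair : ∀ k ∈ s, ∀ l ∈ s, k ≠ l → 1 ≤ dist (x k) (x l)) :
    s.card ≤ 6 := by
  by_contra hgt
  push_neg at hgt
  obtain ⟨t, hts, htc⟩ := Finset.exists_subset_card_eq (show 7 ≤ s.card by omega)
  have hcard : Fintype.card ↥t = 7 := by rw [Fintype.card_coe]; exact htc
  set e := Fintype.equivFinOfCardEq hcard with he
  set p : Fin 7 → Pt := fun a => x ((e.symm a) : Fin n) with hp
  have hmem : ∀ a : Fin 7, ((e.symm a : ↥t) : Fin n) ∈ s := fun a => hts (e.symm a).2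
  have hp1 : ∀ a, 1 ≤ dist (p a) c := fun a => (hs _ (hmem a)).1
  have hp2 : ∀ a, dist (p a) c ≤ r₀ := fun a => (hs _ (hmem a)).2
  have hpne : ∀ a, p a ≠ c := by
    intro a
    rw [← dist_pos]
    linarith [hp1 a]
  obtain ⟨a, b, hab, hsq⟩ := pt_pigeonhole (by norm_num) c p hpne
  have hidx : ((e.symm a : ↥t) : Fin n) ≠ ((e.symm b : ↥t) : Fin n) := by
    intro hcon
    exact hab (by
      have h1 : (e.symm a : ↥t) = (e.symm b : ↥t) := Subtype.coe_injective hcon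
      have := congrArg e h1
      simpa using this)
  have hd1 : 1 ≤ dist (p a) (p b) := hpair _ (hmem a) _ (hmem b) hidx
  have hcast : 2*Real.pi/((7:ℕ):ℝ) = 2*(Real.pi/7) := by
    norm_num; ring
  rw [hcast] at hsq
  have hcs : 2 - 2*Real.cos (2*(Real.pi/7)) = 4 * Real.sin (Real.pi/7)^2 :=
    two_sin_sq (Real.pi/7)
  have hrs : 2*r₀*Real.sin (Real.pi/7) < 1 := by
    have h2s : (0:ℝ) < 2 * Real.sin (Real.pi/7) := mul_pos two_pos sin7_pos
    have := mul_lt_mul_of_pos_right h.r₀_ub h2s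
    rw [inv_mul_cancel₀ (ne_of_gt h2s)] at this
    nlinarith
  have hrc : r₀ < 2*Real.cos (2*(Real.pi/7)) := by
    have h2s : (0:ℝ) < 2 * Real.sin (Real.pi/7) := mul_pos two_pos sin7_pos
    have hle : (2 * Real.sin (Real.pi/7))⁻¹ ≤ 2*Real.cos (2*(Real.pi/7)) := by
      rw [inv_eq_one_div, div_le_iff₀ h2s]
      nlinarith [sincos7]
    exact lt_of_lt_of_le h.r₀_ub hle
  have hcor := corner7 h.r₀_lb (hp1 a) (hp2 a) (hp1 b) (hp2 b) sin7_pos.le hcs hrs hrc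
  nlinarith [hsq, hcor, hd1]

end ConfigAux2

section LemmaC
open Real

variable {r₀ : ℝ} {Va Vr : ℝ → EReal}

/-- toReal bounds on attractive terms. -/
lemma va_toReal_ge (h : PotentialAssumptions r₀ Va Vr) {d : ℝ} (hd : 1 ≤ d) :
    (-1 : ℝ) ≤ (Va d).toReal := by
  have hne_top : Va d ≠ ⊤ := (lt_of_le_of_lt (h.va_nonpos _ hd) (by simp)).ne
  have hh := EReal.toReal_le_toReal (va_ge_neg_one h d)
    (EReal.coe_ne_bot _) hne_top
  rwa [EReal.toReal_coe] at hh

lemma vr_toReal_nonneg (h : PotentialAssumptions r₀ Va Vr) (d : ℝ) :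
    (0 : ℝ) ≤ (Vr d).toReal := by
  rcases lt_or_ge d 1 with hd | hd
  · rw [h.vr_inf d hd]; simp
  · have hne : Vr d ≠ ⊤ := (h.vr_fin d hd).ne
    have hh := EReal.toReal_le_toReal (vr_ge_zero h d) (by simp) hne
    rwa [EReal.toReal_zero] at hh

/-- The key comparison: an optimal configuration has no same-charge pair at
distance `≤ 2 r₀ sin(π/5)`. -/
lemma no_close_same_charge (h : PotentialAssumptions r₀ Va Vr) {n : ℕ} (C : Config n)
    (hC : IsOptimal Va Vr C) {j k : Fin n} (hjk : j ≠ k) (hq : C.q j = C.q k)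
    (hd : dist (C.x j) (C.x k) ≤ 2 * r₀ * Real.sin (Real.pi/5)) : False := by
  classical
  have hmind := min_dist h C hC
  have hr2 := r0_lt_two h
  -- the repulsive interaction of the pair exceeds 6
  have hd1 : 1 ≤ dist (C.x j) (C.x k) := hmind j k hjk
  have h6 : ((6:ℝ) : EReal) < Vr (dist (C.x j) (C.x k)) :=
    lt_of_lt_of_le h.vr_quant (h.vr_antitone _ _ hd1 hd)
  have h6R : (6:ℝ) < (Vr (dist (C.x j) (C.x k))).toReal := by
    have hne_top : Vr (dist (C.x j) (C.x k)) ≠ ⊤ := (h.vr_fin _ hd1).ne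
    have hne_bot : Vr (dist (C.x j) (C.x k)) ≠ ⊥ :=
      (lt_of_lt_of_le (by simp : (⊥:EReal) < 0) (vr_ge_zero h _)).ne'
    rw [← EReal.coe_lt_coe_iff, EReal.coe_toReal hne_top hne_bot]
    exact h6
  -- a far-away point
  have hne_univ : (Finset.univ : Finset (Fin n)).Nonempty := ⟨j, Finset.mem_univ j⟩
  set M := Finset.univ.sup' hne_univ (fun k' => ‖C.x k'‖) with hM
  have hM_ge : ∀ k', ‖C.x k'‖ ≤ M := by
    intro k'
    rw [hM]
    exact Finset.le_sup' (fun k'' => ‖C.x k''‖) (Finset.mem_univ k')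
  have hM0 : 0 ≤ M := le_trans (norm_nonneg _) (hM_ge j)
  set p : Pt := EuclideanSpace.single (0 : Fin 2) (M + 3) with hpdef
  have hpnorm : ‖p‖ = M + 3 := by
    rw [hpdef, EuclideanSpace.norm_single, Real.norm_eq_abs, abs_of_nonneg (by linarith)]
  have hfar : ∀ k', 3 ≤ dist p (C.x k') := by
    intro k'
    have h1 : ‖p‖ - ‖C.x k'‖ ≤ ‖p - C.x k'‖ := norm_sub_norm_le _ _
    rw [← dist_eq_norm] at h1
    have := hM_ge k'
    linarith [hpnorm]
  -- the competitor configuration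
  set C' : Config n := ⟨Function.update C.x j p, C.q, C.hq⟩ with hC'
  have hx' : ∀ i, i ≠ j → C'.x i = C.x i := by
    intro i hi
    show Function.update C.x j p i = C.x i
    rw [Function.update_of_ne hi]
  have hxj : C'.x j = p := by
    show Function.update C.x j p j = p
    rw [Function.update_self]
  have hd' : ∀ i k', i ≠ k' → 1 ≤ dist (C'.x i) (C'.x k') := by
    intro i k' hik
    by_cases hi : i = j
    · subst hi
      rw [hxj, hx' k' (Ne.symm hik)]
      linarith [hfar k']
    · by_cases hk : k' = j
      · subst hk
        rw [hxj, hx' i hi, dist_comm]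
        linarith [hfar i]
      · rw [hx' i hi, hx' k' hk]
        exact hmind i k' hik
  have hfar' : ∀ i k', (i = j ∨ k' = j) → i ≠ k' → 3 ≤ dist (C'.x i) (C'.x k') := by
    intro i k' hor hik
    rcases hor with hi | hk
    · subst hi; rw [hxj, hx' k' (Ne.symm hik)]; exact hfar k'
    · subst hk; rw [hxj, hx' i hik, dist_comm]; exact hfar i
  -- real-valued energies
  set tM : Fin n → Fin n → ℝ := fun i k' =>
    if i ≠ k' ∧ C.q i = C.q k' then (Vr (dist (C.x i) (C.x k'))).toReal else 0 with htM
  set uM : Fin n → Fin n → ℝ := fun i k' =>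
    if i ≠ k' ∧ C.q i ≠ C.q k' then (Va (dist (C.x i) (C.x k'))).toReal else 0 with huM
  set tM' : Fin n → Fin n → ℝ := fun i k' =>
    if i ≠ k' ∧ C'.q i = C'.q k' then (Vr (dist (C'.x i) (C'.x k'))).toReal else 0 with htM'
  set uM' : Fin n → Fin n → ℝ := fun i k' =>
    if i ≠ k' ∧ C'.q i ≠ C'.q k' then (Va (dist (C'.x i) (C'.x k'))).toReal else 0 with huM'
  have hq' : C'.q = C.q := rfl
  -- zero rows/columns for the competitor at j, and agreement off j
  have hVr_far : ∀ i k', (i = j ∨ k' = j) → i ≠ k' → (Vr (dist (C'.x i) (C'.x k'))).toReal = 0 := by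
    intro i k' hor hik
    rw [(h.vr_zero_iff _).2 (le_trans sqrt_two_le_two (by linarith [hfar' i k' hor hik]))]
    simp
  have hVa_far : ∀ i k', (i = j ∨ k' = j) → i ≠ k' → (Va (dist (C'.x i) (C'.x k'))).toReal = 0 := by
    intro i k' hor hik
    rw [h.va_zero _ (by linarith [hfar' i k' hor hik, hr2])]
    simp
  have ht_row : ∀ k', tM' j k' = 0 := by
    intro k'
    by_cases hk : j = k'
    · simp [htM', hk]
    · simp only [htM']
      split
      · exact hVr_far j k' (Or.inl rfl) hk
      · rfl
  have ht_col : ∀ i, tM' i j = 0 := by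
    intro i
    by_cases hi : i = j
    · simp [htM', hi]
    · simp only [htM']
      split
      · exact hVr_far i j (Or.inr rfl) hi
      · rfl
  have hu_row : ∀ k', uM' j k' = 0 := by
    intro k'
    by_cases hk : j = k'
    · simp [huM', hk]
    · simp only [huM']
      split
      · exact hVa_far j k' (Or.inl rfl) hk
      · rfl
  have hu_col : ∀ i, uM' i j = 0 := by
    intro i
    by_cases hi : i = j
    · simp [huM', hi]
    · simp only [huM']
      split
      · exact hVa_far i j (Or.inr rfl) hi
      · rfl
  have ht_off : ∀ i k', i ≠ j → k' ≠ j → tM' i k' = tM i k' := by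
    intro i k' hi hk
    simp only [htM', htM]
    rw [hx' i hi, hx' k' hk]
  have hu_off : ∀ i k', i ≠ j → k' ≠ j → uM' i k' = uM i k' := by
    intro i k' hi hk
    simp only [huM', huM]
    rw [hx' i hi, hx' k' hk]
  have ht_sym : ∀ i k', tM i k' = tM k' i := by
    intro i k'
    simp only [htM]
    by_cases hik : i = k'
    · subst hik; rfl
    · by_cases hqq : C.q i = C.q k'
      · rw [if_pos ⟨hik, hqq⟩, if_pos ⟨Ne.symm hik, hqq.symm⟩, dist_comm]
      · rw [if_neg (fun hcc => hqq hcc.2), if_neg (fun hcc => hqq hcc.2.symm)]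
  have hu_sym : ∀ i k', uM i k' = uM k' i := by
    intro i k'
    simp only [huM]
    by_cases hik : i = k'
    · subst hik; rfl
    · by_cases hqq : C.q i = C.q k'
      · rw [if_neg (fun hcc => hcc.2 hqq), if_neg (fun hcc => hcc.2 hqq.symm)]
      · rw [if_pos ⟨hik, hqq⟩, if_pos ⟨Ne.symm hik, fun hcc => hqq hcc.symm⟩, dist_comm]
  have ht_diag : tM j j = 0 := by simp [htM]
  have hu_diag : uM j j = 0 := by simp [huM]
  -- the sum identities
  have hT := row_col_diff tM tM' j ht_sym (fun i k' hi hk => (ht_off i k' hi hk))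
    ht_row ht_col ht_diag
  have hU := row_col_diff uM uM' j hu_sym (fun i k' hi hk => (hu_off i k' hi hk))
    hu_row hu_col hu_diag
  -- bounds on the removed row
  have ht_nonneg : ∀ k', 0 ≤ tM j k' := by
    intro k'
    simp only [htM]
    split
    · exact vr_toReal_nonneg h _
    · exact le_refl _
  have ht_key : (6:ℝ) < tM j k := by
    simp only [htM]
    rw [if_pos ⟨hjk, hq⟩]
    exact h6R
  have hT_lb : (6:ℝ) < ∑ k', tM j k' := by
    have hsingle : tM j k ≤ ∑ k', tM j k' :=
      Finset.single_le_sum (fun k' _ => ht_nonneg k') (Finset.mem_univ k)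
    linarith
  -- attractive row bounded below by -6
  set s : Finset (Fin n) :=
    Finset.univ.filter (fun k' => k' ≠ j ∧ dist (C.x k') (C.x j) ≤ r₀) with hsdef
  have hcard : s.card ≤ 6 := by
    apply card_le_six h C.x (C.x j) s
    · intro k' hk'
      rw [hsdef, Finset.mem_filter] at hk'
      exact ⟨hmind k' j hk'.2.1, hk'.2.2⟩
    · intro k' hk' l hl hkl
      exact hmind k' l hkl
  have hu_lb : ∀ k', (if k' ∈ s then (-1:ℝ) else 0) ≤ uM j k' := by
    intro k'
    by_cases hks : k' ∈ s
    · rw [if_pos hks]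
      simp only [huM]
      split
      · rename_i hcc
        exact va_toReal_ge h (hmind j k' hcc.1)
      · norm_num
    · rw [if_neg hks]
      rw [hsdef, Finset.mem_filter] at hks
      push_neg at hks
      by_cases hkj : k' = j
      · subst hkj; simp [huM]
      · have hfar2 : r₀ < dist (C.x k') (C.x j) := by
          have := hks (Finset.mem_univ k') hkj
          linarith
        simp only [huM]
        split
        · rw [dist_comm] at hfar2
          rw [h.va_zero _ hfar2]
          simp
        · exact le_refl _
  have hU_lb : (-6:ℝ) ≤ ∑ k', uM j k' := by
    have h1 : ∑ k', (if k' ∈ s then (-1:ℝ) else 0) ≤ ∑ k', uM j k' :=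
      Finset.sum_le_sum (fun k' _ => hu_lb k')
    have h2 : ∑ k', (if k' ∈ s then (-1:ℝ) else 0) = -(s.card : ℝ) := by
      rw [Finset.sum_ite_mem, Finset.univ_inter, Finset.sum_const, nsmul_eq_mul]
      ring
    rw [h2] at h1
    have : (s.card : ℝ) ≤ 6 := by exact_mod_cast hcard
    linarith
  -- assemble: real energy strictly decreases
  have hE := energy_eq_coe h C hmind
  have hE' := energy_eq_coe h C' hd'
  -- optimality gives energy C ≤ energy C'
  have hCeq : energy Va Vr C = Emin Va Vr n (netCharge C) := hC
  have hnet : netCharge C' = netCharge C := rfl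
  have hle : energy Va Vr C ≤ energy Va Vr C' := by
    rw [hCeq]
    exact sInf_le ⟨C', hnet, rfl⟩
  rw [hE, hE'] at hle
  rw [EReal.coe_le_coe_iff] at hle
  -- but the real computation says otherwise
  have hq'' : ∀ i k', (C'.q i = C'.q k') = (C.q i = C.q k') := fun _ _ => rfl
  rw [hT, hU] at hle
  nlinarith [hT_lb, hU_lb]

end LemmaC

/-- Optimal configurations have alternating charge distribution, all bond
angles in `[2π/5, 8π/5]`, and every atom has at most four neighbors. -/
theorem optimal_configuration_elementary_properties (r₀ : ℝ) (Va Vr : ℝ → EReal)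
    (h : PotentialAssumptions r₀ Va Vr) (n : ℕ) (C : Config n)
    (hC : IsOptimal Va Vr C) :
    AlternatingCharges r₀ C ∧
    (∀ i : Fin n, ∀ y z : Pt, y ∈ nbhd r₀ C i → z ∈ nbhd r₀ C i → y ≠ z →
      2 * Real.pi / 5 ≤ EuclideanGeometry.angle y (C.x i) z ∧
      EuclideanGeometry.angle y (C.x i) z ≤ 8 * Real.pi / 5) ∧
    (∀ i : Fin n, (nbhd r₀ C i).ncard ≤ 4) := by
  have hmind := min_dist h C hC
  have hr₀sin : r₀ ≤ 2 * r₀ * Real.sin (Real.pi/5) := by nlinarith [h.r₀_lb, sin5_lb]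
  -- identity for the threshold distance
  have hid : (2*r₀*Real.sin (Real.pi/5))^2 = 2*r₀^2*(1 - Real.cos (2*Real.pi/5)) := by
    have hts := two_sin_sq (Real.pi/5)
    have harg : 2*(Real.pi/5) = 2*Real.pi/5 := by ring
    rw [harg] at hts
    nlinarith [hts]
  have hthr0 : 0 ≤ 2*r₀*Real.sin (Real.pi/5) := by nlinarith [h.r₀_lb, sin5_lb]
  -- Claim 1: alternating charges
  have halt : AlternatingCharges r₀ C := by
    intro i j hadj hq
    have hij : i ≠ j := fun hc => hadj.1 (by rw [hc])
    exact no_close_same_charge h C hC hij hq (le_trans hadj.2 hr₀sin)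
  -- Claim 2: angle bounds
  have hang : ∀ i : Fin n, ∀ y z : Pt, y ∈ nbhd r₀ C i → z ∈ nbhd r₀ C i → y ≠ z →
      2 * Real.pi / 5 ≤ EuclideanGeometry.angle y (C.x i) z ∧
      EuclideanGeometry.angle y (C.x i) z ≤ 8 * Real.pi / 5 := by
    intro i y z hy hz hyz
    obtain ⟨⟨jy, hjy⟩, hyne, hydist⟩ := hy
    obtain ⟨⟨jz, hjz⟩, hzne, hzdist⟩ := hz
    have hjyi : jy ≠ i := fun hc => hyne (by rw [← hjy, hc])
    have hjzi : jz ≠ i := fun hc => hzne (by rw [← hjz, hc])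
    have hjyz : jy ≠ jz := fun hc => hyz (by rw [← hjy, ← hjz, hc])
    have hA1 : 1 ≤ dist y (C.x i) := by rw [← hjy]; exact hmind jy i hjyi
    have hB1 : 1 ≤ dist z (C.x i) := by rw [← hjz]; exact hmind jz i hjzi
    constructor
    · by_contra hlt
      push_neg at hlt
      have hang0 := EuclideanGeometry.angle_nonneg y (C.x i) z
      have hcos : Real.cos (2*Real.pi/5) ≤ Real.cos (EuclideanGeometry.angle y (C.x i) z) :=
        Real.cos_le_cos_of_nonneg_of_le_pi hang0 (by nlinarith [Real.pi_pos]) hlt.le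
      have hdef : EuclideanGeometry.angle y (C.x i) z
          = InnerProductGeometry.angle (y - C.x i) (z - C.x i) := rfl
      have hmul := InnerProductGeometry.cos_angle_mul_norm_mul_norm (y - C.x i) (z - C.x i)
      have hnormy : ‖y - C.x i‖ = dist y (C.x i) := (dist_eq_norm _ _).symm
      have hnormz : ‖z - C.x i‖ = dist z (C.x i) := (dist_eq_norm _ _).symm
      rw [hnormy, hnormz] at hmul
      rw [hdef] at hcos
      have hAB : 0 ≤ dist y (C.x i) * dist z (C.x i) := by positivity
      have hinner : Real.cos (2*Real.pi/5) * (dist y (C.x i) * dist z (C.x i))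
          ≤ (inner ℝ (y - C.x i) (z - C.x i) : ℝ) := by
        rw [← hmul]
        exact mul_le_mul_of_nonneg_right hcos hAB
      have hns : dist y z ^2 = (dist y (C.x i))^2 + (dist z (C.x i))^2
          - 2 * (inner ℝ (y - C.x i) (z - C.x i) : ℝ) := by
        rw [dist_eq_norm, dist_eq_norm, dist_eq_norm]
        have hdd : y - z = (y - C.x i) - (z - C.x i) := by abel
        rw [hdd, @norm_sub_sq_real]
        ring
      have hcor := corner5 h.r₀_lb hA1 hydist hB1 hzdist cos5_mem.1 cos5_mem.2
      have hbound : dist y z ≤ 2*r₀*Real.sin (Real.pi/5) := by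
        by_contra hgt
        push_neg at hgt
        nlinarith [hns, hcor, hid, hinner, dist_nonneg (x := y) (y := z)]
      by_cases hqq : C.q jy = C.q jz
      · apply no_close_same_charge h C hC hjyz hqq
        rw [hjy, hjz]
        exact hbound
      · have hone : C.q i = C.q jy ∨ C.q i = C.q jz := by
          rcases C.hq i with hi | hi <;> rcases C.hq jy with ha | ha <;>
            rcases C.hq jz with hb | hb <;> omega
        rcases hone with hqi | hqi
        · apply no_close_same_charge h C hC (Ne.symm hjyi) hqi
          rw [hjy, dist_comm]
          linarith [hydist]
        · apply no_close_same_charge h C hC (Ne.symm hjzi) hqi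
          rw [hjz, dist_comm]
          linarith [hzdist]
    · exact le_trans (EuclideanGeometry.angle_le_pi y (C.x i) z)
        (by nlinarith [Real.pi_pos])
  -- Claim 3: at most four neighbors
  have hcount : ∀ i : Fin n, (nbhd r₀ C i).ncard ≤ 4 := by
    intro i
    by_contra hcon
    push_neg at hcon
    have h5 : 5 ≤ (nbhd r₀ C i).ncard := hcon
    obtain ⟨t, hsub, htn⟩ := Set.exists_subset_card_eq h5
    have htfin : t.Finite := Set.finite_of_ncard_ne_zero (by omega)
    have htc : htfin.toFinset.card = 5 := by
      rw [← Set.ncard_eq_toFinset_card t htfin]; exact htn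
    have hcard5 : Fintype.card ↥htfin.toFinset = 5 := by rw [Fintype.card_coe]; exact htc
    set e := Fintype.equivFinOfCardEq hcard5 with he
    set p : Fin 5 → Pt := fun a => ((e.symm a : ↥htfin.toFinset) : Pt) with hp
    have hmem : ∀ a, p a ∈ nbhd r₀ C i := by
      intro a
      apply hsub
      have := (e.symm a).2
      rwa [Set.Finite.mem_toFinset] at this
    have hpinj : Function.Injective p := by
      intro a b hab
      have h1 : (e.symm a : ↥htfin.toFinset) = (e.symm b) := Subtype.coe_injective hab
      have := congrArg e h1
      simpa using this
    have hidx : ∀ a, ∃ ja : Fin n, C.x ja = p a := fun a => (hmem a).1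
    choose jf hjf using hidx
    have hjfi : ∀ a, jf a ≠ i := by
      intro a hc
      exact (hmem a).2.1 (by rw [← hjf a, hc])
    have hA1 : ∀ a, 1 ≤ dist (p a) (C.x i) := by
      intro a; rw [← hjf a]; exact hmind (jf a) i (hjfi a)
    have hA2 : ∀ a, dist (p a) (C.x i) ≤ r₀ := fun a => (hmem a).2.2
    have hpne : ∀ a, p a ≠ C.x i := fun a => (hmem a).2.1
    obtain ⟨a, b, hab, hsq⟩ := pt_pigeonhole (by norm_num) (C.x i) p hpne
    have hcast : 2*Real.pi/((5:ℕ):ℝ) = 2*Real.pi/5 := by norm_num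
    rw [hcast] at hsq
    have hcor := corner5 h.r₀_lb (hA1 a) (hA2 a) (hA1 b) (hA2 b) cos5_mem.1 cos5_mem.2
    have hbound : dist (p a) (p b) ≤ 2*r₀*Real.sin (Real.pi/5) := by
      by_contra hgt
      push_neg at hgt
      nlinarith [hsq, hcor, hid, dist_nonneg (x := p a) (y := p b)]
    have hadj : ∀ a, (bondGraph r₀ C).Adj i (jf a) := by
      intro a
      constructor
      · intro hc
        exact (hmem a).2.1 (by rw [← hjf a, ← hc])
      · rw [hjf a, dist_comm]; exact hA2 a
    have hqne : ∀ a, C.q i ≠ C.q (jf a) := fun a => halt i (jf a) (hadj a)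
    have hqq : C.q (jf a) = C.q (jf b) := by
      have hqa := hqne a
      have hqb := hqne b
      rcases C.hq i with hi | hi <;> rcases C.hq (jf a) with ha | ha <;>
        rcases C.hq (jf b) with hb | hb <;> omega
    have hjab : jf a ≠ jf b := by
      intro hc
      exact hab (hpinj (by rw [← hjf a, ← hjf b, hc]))
    apply no_close_same_charge h C hC hjab hqq
    rw [hjf a, hjf b]
    exact hbound
  exact ⟨halt, hang, hcount⟩
end

section
/- Let C_n be an n-particle configuration with net charge Q(C_n) ≥ 0. Then E(C_n) ≥ −2n + 2·Q(C_n). Conversely, if every atom with charge −1 has exactly four neighbors, all bonds have unit length, and the configuration is repulsion-free (|x_i − x_j| ≥ √2 whenever i ≠ j and q_i = q_j), then E(C_n) = −2n + 2·Q(C_n). -/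
open scoped BigOperators
open Real

section AuxIonic
noncomputable def circDiff (a b : ℝ) : ℝ := min |a - b| (2*Real.pi - |a - b|)

lemma circDiff_comm (a b : ℝ) : circDiff a b = circDiff b a := by
  unfold circDiff; rw [abs_sub_comm]

lemma sin_pi7_gt : (0.41 : ℝ) < Real.sin (Real.pi/7) := by
  have h1 : (3.141592 : ℝ) < Real.pi := Real.pi_gt_d6
  have h2 : Real.pi < 3.15 := by linarith [Real.pi_lt_d2]
  have hx2 : Real.pi / 7 ≤ 1 := by linarith
  have hx0 : (0:ℝ) < Real.pi/7 := by linarith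
  have h3 := Real.sin_gt_sub_cube hx0
  have hxu : Real.pi/7 < 0.45 := by linarith
  have hxl : (0.4487:ℝ) < Real.pi/7 := by linarith
  have hsq : (Real.pi/7)^2 < 0.2025 := by nlinarith
  have hcube : (Real.pi/7)^3 < 0.2025*(Real.pi/7) := by nlinarith
  nlinarith [h3, hcube, hxl]

lemma sin_pi5_gt : (1/2 : ℝ) < Real.sin (Real.pi/5) := by
  have h1 := Real.pi_pos
  rw [← Real.sin_pi_div_six]
  apply Real.strictMonoOn_sin ⟨by linarith, by linarith⟩ ⟨by linarith, by linarith⟩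
  linarith

lemma sqrt_two_gt : (1.41 : ℝ) < Real.sqrt 2 := by
  nlinarith [Real.sq_sqrt (by norm_num : (2:ℝ) ≥ 0), Real.sqrt_nonneg 2]

-- EReal helpers
lemma ecoe_sum {α : Type*} (s : Finset α) (f : α → ℝ) :
    ((∑ a ∈ s, f a : ℝ) : EReal) = ∑ a ∈ s, (f a : EReal) := by
  induction s using Finset.cons_induction with
  | empty => simp
  | cons a s ha ih => rw [Finset.sum_cons, Finset.sum_cons, EReal.coe_add, ih]

lemma ecoe_mul_le {c : ℝ} (hc : 0 < c) {y : ℝ} {X : EReal} (h : (y : EReal) ≤ X) :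
    ((c * y : ℝ) : EReal) ≤ (c : EReal) * X := by
  induction X with
  | bot => simp at h
  | coe x =>
      rw [← EReal.coe_mul]
      exact EReal.coe_le_coe_iff.2 (mul_le_mul_of_nonneg_left (EReal.coe_le_coe_iff.1 h) hc.le)
  | top => rw [EReal.coe_mul_top_of_pos hc]; exact le_top

lemma ecoe_mul_ne_bot {c : ℝ} (hc : 0 < c) {X : EReal} (hX : X ≠ ⊥) : (c:EReal)*X ≠ ⊥ := by
  induction X with
  | bot => exact absurd rfl hX
  | coe x => rw [← EReal.coe_mul]; exact EReal.coe_ne_bot _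
  | top => rw [EReal.coe_mul_top_of_pos hc]; exact bot_lt_top.ne'

lemma esum_ne_bot {α : Type*} (s : Finset α) (f : α → EReal) (h : ∀ a ∈ s, f a ≠ ⊥) :
    ∑ a ∈ s, f a ≠ ⊥ := by
  induction s using Finset.cons_induction with
  | empty => simp
  | cons a s ha ih =>
      rw [Finset.sum_cons]
      intro hbot
      rcases EReal.add_eq_bot_iff.1 hbot with hb | hb
      · exact h a (Finset.mem_cons_self a s) hb
      · exact ih (fun b hb' => h b (Finset.mem_cons_of_mem hb')) hb

lemma esum_eq_top {α : Type*} [DecidableEq α] (s : Finset α) (f : α → EReal) {a : α} (ha : a ∈ s) (hat : f a = ⊤)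
    (h : ∀ b ∈ s, f b ≠ ⊥) : ∑ b ∈ s, f b = ⊤ := by
  rw [← Finset.add_sum_erase s f ha, hat]
  exact EReal.top_add_of_ne_bot (esum_ne_bot _ _ fun b hb => h b (Finset.mem_of_mem_erase hb))


lemma quad_box {c r₀ r₁ r₂ : ℝ} (h1 : 1 ≤ r₁) (h2 : r₁ ≤ r₀) (h3 : 1 ≤ r₂) (h4 : r₂ ≤ r₀)
    (hc1 : c ≤ 1) (ht : 2*r₀*c ≤ 1 + r₀) :
    r₁^2 + r₂^2 - 2*c*(r₁*r₂) ≤ 2*r₀^2*(1 - c) := by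
  have hS0 : 0 ≤ (r₀ - r₁) + (r₀ - r₂) := by linarith
  have haux : (r₁-r₂)^2 ≤ (r₀-1)*((r₀ - r₁) + (r₀ - r₂)) := by
    rcases le_total r₂ r₁ with hle | hle
    · have A1 : r₁ - r₂ ≤ r₀ - 1 := by linarith
      have A2 : r₁ - r₂ ≤ r₀ - r₂ := by linarith
      have A3 : (r₁-r₂)*(r₁-r₂) ≤ (r₀-1)*(r₀-r₂) :=
        mul_le_mul A1 A2 (by linarith) (by linarith)
      nlinarith [mul_nonneg (by linarith : (0:ℝ) ≤ r₀ - 1) (by linarith : (0:ℝ) ≤ r₀ - r₁)]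
    · have A1 : r₂ - r₁ ≤ r₀ - 1 := by linarith
      have A2 : r₂ - r₁ ≤ r₀ - r₁ := by linarith
      have A3 : (r₂-r₁)*(r₂-r₁) ≤ (r₀-1)*(r₀-r₁) :=
        mul_le_mul A1 A2 (by linarith) (by linarith)
      nlinarith [mul_nonneg (by linarith : (0:ℝ) ≤ r₀ - 1) (by linarith : (0:ℝ) ≤ r₀ - r₂)]
  have hSu : (1+r₀)*((r₀ - r₁) + (r₀ - r₂)) ≤ (r₀^2 - r₁^2) + (r₀^2 - r₂^2) := by
    nlinarith [mul_nonneg (by linarith : (0:ℝ) ≤ r₀ - r₁) (by linarith : (0:ℝ) ≤ r₁ - 1),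
      mul_nonneg (by linarith : (0:ℝ) ≤ r₀ - r₂) (by linarith : (0:ℝ) ≤ r₂ - 1)]
  rcases le_total c 0 with hc0 | hc0
  · have P1 : 0 ≤ (1-c) * ((r₀^2 - r₁^2) + (r₀^2 - r₂^2)) :=
      mul_nonneg (by linarith) (by nlinarith)
    have P2 : 0 ≤ (-c) * (r₁-r₂)^2 := mul_nonneg (by linarith) (sq_nonneg _)
    nlinarith [P1, P2]
  · have P1 : 0 ≤ (1-c) * (((r₀^2 - r₁^2) + (r₀^2 - r₂^2)) - (1+r₀)*((r₀ - r₁) + (r₀ - r₂))) :=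
      mul_nonneg (by linarith) (by linarith)
    have P2 : 0 ≤ c * ((r₀-1)*((r₀ - r₁) + (r₀ - r₂)) - (r₁-r₂)^2) :=
      mul_nonneg hc0 (by linarith)
    have P3 : 0 ≤ (1 + r₀ - 2*r₀*c) * ((r₀ - r₁) + (r₀ - r₂)) :=
      mul_nonneg (by linarith) hS0
    nlinarith [P1, P2, P3]

lemma chord_le {r₀ θ₀ : ℝ} (hr : 1 ≤ r₀) (hθ0 : 0 ≤ θ₀) (hθπ : θ₀ ≤ Real.pi)
    (hcos : 2*r₀*Real.cos θ₀ ≤ 1 + r₀) {u v : ℂ}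
    (hu1 : 1 ≤ ‖u‖) (hur : ‖u‖ ≤ r₀)
    (hv1 : 1 ≤ ‖v‖) (hvr : ‖v‖ ≤ r₀)
    (hd : circDiff (Complex.arg u) (Complex.arg v) ≤ θ₀) :
    ‖u - v‖ ≤ 2*r₀*Real.sin (θ₀/2) := by
  have hπ := Real.pi_pos
  have hu0 : u ≠ 0 := by
    intro h; rw [h] at hu1; simp at hu1; linarith
  have hv0 : v ≠ 0 := by
    intro h; rw [h] at hv1; simp at hv1; linarith
  set a := Complex.arg u with ha
  set b := Complex.arg v with hb
  have hau : a ∈ Set.Ioc (-Real.pi) Real.pi := Complex.arg_mem_Ioc u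
  have hbu : b ∈ Set.Ioc (-Real.pi) Real.pi := Complex.arg_mem_Ioc v
  set m := |a - b| with hm
  have hm0 : 0 ≤ m := abs_nonneg _
  have hm2 : m < 2*Real.pi := by
    rw [hm, abs_sub_lt_iff]
    constructor <;> linarith [hau.1, hau.2, hbu.1, hbu.2]
  -- cos (a - b) ≥ cos θ₀
  have hcosm : Real.cos θ₀ ≤ Real.cos (a - b) := by
    have hca : Real.cos (a - b) = Real.cos m := by rw [hm, Real.cos_abs]
    rcases le_or_gt m Real.pi with hmle | hmgt
    · have hmin : circDiff a b = m := by
        rw [circDiff, ← hm, min_eq_left]; linarith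
      rw [hca]
      exact Real.cos_le_cos_of_nonneg_of_le_pi hm0 hθπ (by rw [hmin] at hd; exact hd)
    · have hmin : circDiff a b = 2*Real.pi - m := by
        rw [circDiff, ← hm, min_eq_right]; linarith
      have h2 : Real.cos m = Real.cos (2*Real.pi - m) := by
        rw [Real.cos_two_pi_sub]
      rw [hca, h2]
      exact Real.cos_le_cos_of_nonneg_of_le_pi (by linarith) hθπ (by rw [hmin] at hd; exact hd)
  -- law of cosines
  have hre : u.re = ‖u‖ * Real.cos a := by
    rw [ha, Complex.cos_arg hu0]; field_simp
  have him : u.im = ‖u‖ * Real.sin a := by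
    rw [ha, Complex.sin_arg]; field_simp
  have hre' : v.re = ‖v‖ * Real.cos b := by
    rw [hb, Complex.cos_arg hv0]; field_simp
  have him' : v.im = ‖v‖ * Real.sin b := by
    rw [hb, Complex.sin_arg]; field_simp
  have hlaw : ‖u - v‖ ^ 2
      = ‖u‖ ^ 2 + ‖v‖ ^ 2
        - 2 * Real.cos (a - b) * (‖u‖ * ‖v‖) := by
    rw [← Complex.normSq_eq_norm_sq, Complex.normSq_apply, Complex.sub_re, Complex.sub_im,
      Real.cos_sub]
    rw [hre, him, hre', him']
    linear_combination (‖u‖^2) * Real.sin_sq_add_cos_sq a + (‖v‖^2) * Real.sin_sq_add_cos_sq b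
  have hhalf : Real.cos θ₀ = 1 - 2*Real.sin (θ₀/2)^2 := by
    have h2 : Real.cos (2*(θ₀/2)) = Real.cos (θ₀/2)^2 - Real.sin (θ₀/2)^2 := Real.cos_two_mul' _
    have h3 : Real.sin (θ₀/2)^2 + Real.cos (θ₀/2)^2 = 1 := Real.sin_sq_add_cos_sq _
    have h4 : 2*(θ₀/2) = θ₀ := by ring
    rw [h4] at h2; linarith
  have hkey : ‖u - v‖ ^ 2 ≤ (2*r₀*Real.sin (θ₀/2))^2 := by
    have hq := quad_box hu1 hur hv1 hvr (Real.cos_le_one θ₀) hcos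
    have h5 : 2 * Real.cos (a-b) * (‖u‖ * ‖v‖)
        ≥ 2 * Real.cos θ₀ * (‖u‖ * ‖v‖) := by
      have : (0:ℝ) ≤ ‖u‖ * ‖v‖ := by positivity
      nlinarith [hcosm]
    calc ‖u - v‖ ^ 2
        ≤ ‖u‖ ^ 2 + ‖v‖ ^ 2
          - 2 * Real.cos θ₀ * (‖u‖ * ‖v‖) := by rw [hlaw]; linarith
      _ ≤ 2*r₀^2*(1 - Real.cos θ₀) := by nlinarith [hq]
      _ = (2*r₀*Real.sin (θ₀/2))^2 := by rw [hhalf]; ring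
  have hs0 : 0 ≤ 2*r₀*Real.sin (θ₀/2) := by
    have : 0 ≤ Real.sin (θ₀/2) := Real.sin_nonneg_of_nonneg_of_le_pi (by linarith) (by linarith)
    positivity
  nlinarith [hkey, norm_nonneg (u - v), hs0]


lemma circDiff_comm' (a b : ℝ) : circDiff a b = circDiff b a := by
  unfold circDiff; rw [abs_sub_comm]

lemma gap_facts {n k : ℕ} (s : Finset (Fin n)) (hk : s.card = k + 1) (θ : Fin n → ℝ)
    (hθ : ∀ i ∈ s, θ i ∈ Set.Ioc (-Real.pi) Real.pi) :
    ∃ (p : Fin (k+1) → Fin n) (g : Fin (k+1) → ℝ),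
      Function.Injective p ∧ (∀ j, p j ∈ s) ∧ (∀ j, 0 ≤ g j) ∧
      (∑ j, g j) = 2*Real.pi ∧
      ∀ j : Fin (k+1), circDiff (θ (p j)) (θ (p (j+1))) ≤ g j := by
  classical
  set f : Fin n → ℝ ×ₗ (Fin n) := fun i => toLex (θ i, i) with hf
  have hfinj : Function.Injective f := by
    intro i j hij
    have := congrArg (fun z => (ofLex z).2) hij
    simpa [hf] using this
  set t : Finset (ℝ ×ₗ Fin n) := s.image f with ht
  have htc : t.card = k + 1 := by
    rw [ht, Finset.card_image_of_injective _ hfinj, hk]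
  set e := t.orderIsoOfFin htc with he
  set p : Fin (k+1) → Fin n := fun j => (ofLex (e j).1).2 with hp
  have hval : ∀ j, (e j).1 = f (p j) := by
    intro j
    obtain ⟨i, _, hfi⟩ := Finset.mem_image.1 (e j).2
    rw [← hfi]; rw [hp]; simp only []
    congr 1
    rw [← hfi]
    simp [hf]
  have hmem : ∀ j, p j ∈ s := by
    intro j
    obtain ⟨i, hi, hfi⟩ := Finset.mem_image.1 (e j).2
    have : p j = i := by
      rw [hp]; simp only []; rw [← hfi]; simp [hf]
    rw [this]; exact hi
  have hpinj : Function.Injective p := by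
    intro a b hab
    apply e.injective
    apply Subtype.ext
    rw [hval a, hval b, hab]
  have hθval : ∀ j, θ (p j) = (ofLex (e j).1).1 := by
    intro j; rw [hval j]; simp [hf]
  have hmono : ∀ {a b : Fin (k+1)}, a ≤ b → θ (p a) ≤ θ (p b) := by
    intro a b hab
    have h2 : (e a).1 ≤ (e b).1 := Subtype.coe_le_coe.2 (e.monotone hab)
    rw [hval a, hval b] at h2
    rcases Prod.Lex.le_iff.1 h2 with h | h
    · exact le_of_lt h
    · exact le_of_eq h.1
  -- W
  set W : ℕ → ℝ := fun m => θ (p ⟨min m k, by omega⟩) with hW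
  have hWmono : ∀ {m m' : ℕ}, m ≤ m' → W m ≤ W m' := by
    intro m m' hmm
    exact hmono (by simp [Fin.le_def]; omega)
  have hWIoc : ∀ m, W m ∈ Set.Ioc (-Real.pi) Real.pi := fun m => hθ _ (hmem _)
  set G : ℕ → ℝ := fun m => if m = k then 2*Real.pi - (W k - W 0) else W (m+1) - W m with hG
  refine ⟨p, fun j => G j.1, hpinj, hmem, ?_, ?_, ?_⟩
  · intro j
    show (0:ℝ) ≤ G j.1
    by_cases hj : (j : ℕ) = k
    · simp only [hG]
      rw [if_pos hj]
      have := (hWIoc k).2; have := (hWIoc 0).1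
      linarith
    · simp only [hG]
      rw [if_neg hj]
      have := hWmono (Nat.le_succ j.1)
      linarith
  · rw [Fin.sum_univ_eq_sum_range G (k+1), Finset.sum_range_succ]
    have h1 : ∀ m ∈ Finset.range k, G m = W (m+1) - W m := by
      intro m hm
      have := Finset.mem_range.1 hm
      rw [hG]; exact if_neg (by omega)
    rw [Finset.sum_congr rfl h1, Finset.sum_range_sub W k]
    have h2 : G k = 2*Real.pi - (W k - W 0) := by rw [hG]; simp
    rw [h2]; ring
  · intro j
    show circDiff (θ (p j)) (θ (p (j+1))) ≤ G j.1
    by_cases hj : (j : ℕ) = k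
    · have hjl : j = Fin.last k := by apply Fin.ext; simpa using hj
      have hj1 : j + 1 = 0 := by rw [hjl]; exact Fin.last_add_one k
      have hθj : θ (p j) = W k := by
        rw [hW]; simp only []
        congr 2
        apply Fin.ext; simp [hj]
      have hθj1 : θ (p (j+1)) = W 0 := by
        rw [hj1, hW]; simp only []
        congr 2
      rw [hθj, hθj1]
      have hd0 : 0 ≤ W k - W 0 := by have := hWmono (Nat.zero_le k); linarith
      have habs : |W k - W 0| = W k - W 0 := abs_of_nonneg hd0
      rw [circDiff, habs]
      have : G j.1 = 2*Real.pi - (W k - W 0) := by rw [hG]; simp [hj]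
      rw [this]
      exact min_le_right _ _
    · have hjlt : (j:ℕ) < k := by omega
      have hj1 : ((j + 1 : Fin (k+1)) : ℕ) = (j : ℕ) + 1 := by
        rw [Fin.val_add_one]
        have : j ≠ Fin.last k := by
          intro h; rw [h] at hjlt; simp at hjlt
        simp [this]
      have hθj : θ (p j) = W j.1 := by
        rw [hW]; simp only []; congr 2; apply Fin.ext; simp; omega
      have hθj1 : θ (p (j+1)) = W (j.1+1) := by
        rw [hW]; simp only []; congr 2; apply Fin.ext; simp [hj1]; omega
      rw [hθj, hθj1]
      have hd0 : 0 ≤ W (j.1+1) - W j.1 := by have := hWmono (Nat.le_succ j.1); linarith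
      have habs : |W j.1 - W (j.1+1)| = W (j.1+1) - W j.1 := by
        rw [abs_sub_comm]; exact abs_of_nonneg hd0
      rw [circDiff, habs]
      have : G j.1 = W (j.1+1) - W j.1 := by rw [hG]; simp [Nat.ne_of_lt hjlt]
      rw [this]
      exact min_le_left _ _

lemma card_le_six_of_circsep {n : ℕ} (s : Finset (Fin n)) (θ : Fin n → ℝ)
    (hθ : ∀ i ∈ s, θ i ∈ Set.Ioc (-Real.pi) Real.pi)
    (hsep : ∀ i ∈ s, ∀ j ∈ s, i ≠ j → 2*Real.pi/7 < circDiff (θ i) (θ j)) :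
    s.card ≤ 6 := by
  have hπ := Real.pi_pos
  by_contra hlt
  push_neg at hlt
  set k := s.card - 1 with hkdef
  have hk : s.card = k + 1 := by omega
  have hk6 : 6 ≤ k := by omega
  obtain ⟨p, g, hpinj, hmem, hg0, hsum, hcover⟩ := gap_facts s hk θ hθ
  have hne : ∀ j : Fin (k+1), (j:Fin (k+1)) ≠ j + 1 := by
    intro j h
    have h1 : ((j+1 : Fin (k+1)) : ℕ) = if j = Fin.last k then 0 else (j:ℕ)+1 := by
      rw [Fin.val_add_one]
    by_cases hl : j = Fin.last k
    · rw [if_pos hl] at h1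
      rw [← h] at h1
      rw [hl] at h1
      simp at h1
      omega
    · rw [if_neg hl] at h1
      rw [← h] at h1
      omega
  have hglb : ∀ j : Fin (k+1), 2*Real.pi/7 < g j := by
    intro j
    have h1 := hsep (p j) (hmem j) (p (j+1)) (hmem (j+1)) (fun hpp => hne j (hpinj hpp))
    exact lt_of_lt_of_le h1 (hcover j)
  have hlt2 : ∑ _j : Fin (k+1), (2*Real.pi/7) < ∑ j, g j :=
    Finset.sum_lt_sum_of_nonempty (by simp) (fun j _ => hglb j)
  rw [hsum, Finset.sum_const, Finset.card_univ, Fintype.card_fin, nsmul_eq_mul] at hlt2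
  have : (7 : ℝ) ≤ (k+1 : ℕ) := by exact_mod_cast by omega
  nlinarith [hlt2, this]

lemma good_pairs {n : ℕ} (s : Finset (Fin n)) (θ : Fin n → ℝ)
    (hθ : ∀ i ∈ s, θ i ∈ Set.Ioc (-Real.pi) Real.pi) :
    2 * (s.card - 4) ≤ ((s ×ˢ s).filter (fun q : Fin n × Fin n =>
      q.1 ≠ q.2 ∧ circDiff (θ q.1) (θ q.2) ≤ 2*Real.pi/5)).card := by
  classical
  have hπ := Real.pi_pos
  rcases le_or_gt s.card 4 with hc4 | hc4
  · rw [Nat.sub_eq_zero_of_le hc4]; simp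
  · set k := s.card - 1 with hkdef
    have hk : s.card = k + 1 := by omega
    have hk4 : 4 ≤ k := by omega
    obtain ⟨p, g, hpinj, hmem, hg0, hsum, hcover⟩ := gap_facts s hk θ hθ
    set Bad := Finset.univ.filter (fun j : Fin (k+1) => 2*Real.pi/5 < g j) with hBadDef
    have hBad : Bad.card ≤ 4 := by
      by_contra hB
      push_neg at hB
      have hBne : Bad.Nonempty := Finset.card_pos.1 (by omega)
      have h1 : ∑ _j ∈ Bad, (2*Real.pi/5) < ∑ j ∈ Bad, g j :=
        Finset.sum_lt_sum_of_nonempty hBne (fun j hj => (Finset.mem_filter.1 hj).2)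
      have h2 : ∑ j ∈ Bad, g j ≤ ∑ j : Fin (k+1), g j :=
        Finset.sum_le_sum_of_subset_of_nonneg (Finset.subset_univ _) (fun j _ _ => hg0 j)
      rw [Finset.sum_const, nsmul_eq_mul] at h1
      rw [hsum] at h2
      have h5 : (5:ℝ) ≤ Bad.card := by exact_mod_cast hB
      nlinarith [h1, h2, h5]
    set Good := Finset.univ \ Bad with hGoodDef
    have hGood : k + 1 - 4 ≤ Good.card := by
      have h3 := Finset.card_sdiff_of_subset (Finset.subset_univ Bad)
      rw [← hGoodDef, Finset.card_univ, Fintype.card_fin] at h3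
      omega
    have hval1 : ∀ j : Fin (k+1), ((j + 1 : Fin (k+1)) : ℕ) = if j = Fin.last k then 0 else (j:ℕ)+1 := by
      intro j; rw [Fin.val_add_one]
    have hne : ∀ j : Fin (k+1), j ≠ j + 1 := by
      intro j h
      have h1 := hval1 j
      by_cases hl : j = Fin.last k
      · rw [if_pos hl] at h1; rw [← h] at h1; rw [hl] at h1; simp at h1; omega
      · rw [if_neg hl] at h1; rw [← h] at h1; omega
    set F := ((s ×ˢ s).filter (fun q : Fin n × Fin n =>
      q.1 ≠ q.2 ∧ circDiff (θ q.1) (θ q.2) ≤ 2*Real.pi/5)) with hF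
    have hmemF : ∀ j ∈ Good, (p j, p (j+1)) ∈ F ∧ (p (j+1), p j) ∈ F := by
      intro j hj
      have hgj : g j ≤ 2*Real.pi/5 := by
        have := Finset.mem_sdiff.1 hj
        have h2 := this.2
        rw [hBadDef] at h2
        simp only [Finset.mem_filter, Finset.mem_univ, true_and] at h2
        linarith [not_lt.1 h2]
      have hd : circDiff (θ (p j)) (θ (p (j+1))) ≤ 2*Real.pi/5 := le_trans (hcover j) hgj
      have hnepp : p j ≠ p (j+1) := fun hpp => hne j (hpinj hpp)
      constructor
      · exact Finset.mem_filter.2 ⟨Finset.mem_product.2 ⟨hmem j, hmem (j+1)⟩, hnepp, hd⟩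
      · refine Finset.mem_filter.2 ⟨Finset.mem_product.2 ⟨hmem (j+1), hmem j⟩, hnepp.symm, ?_⟩
        rw [circDiff_comm']; exact hd
    set φ1 : Fin (k+1) → Fin n × Fin n := fun j => (p j, p (j+1)) with hφ1
    set φ2 : Fin (k+1) → Fin n × Fin n := fun j => (p (j+1), p j) with hφ2
    have hinj1 : Set.InjOn φ1 Good := fun a _ b _ h => hpinj (congrArg Prod.fst h)
    have hinj2 : Set.InjOn φ2 Good := fun a _ b _ h => hpinj (congrArg Prod.snd h)
    have hdisj : Disjoint (Good.image φ1) (Good.image φ2) := by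
      rw [Finset.disjoint_left]
      rintro a h1 h2
      obtain ⟨j, hj, hj'⟩ := Finset.mem_image.1 h1
      obtain ⟨j', hj2, hj2'⟩ := Finset.mem_image.1 h2
      rw [← hj2'] at hj'
      have e1 : p j = p (j' + 1) := congrArg Prod.fst hj'
      have e2 : p (j + 1) = p j' := congrArg Prod.snd hj'
      have e1' : j = j' + 1 := hpinj e1
      have e2' : j + 1 = j' := hpinj e2
      have v1 := hval1 j'
      have v2 := hval1 j
      rw [← e1'] at v1
      rw [e2'] at v2
      by_cases hl1 : j' = Fin.last k
      · rw [if_pos hl1] at v1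
        by_cases hl2 : j = Fin.last k
        · exact hne j (by rw [hl2, ← hl1] at e2' ⊢; exact e2'.symm)
        · rw [if_neg hl2] at v2
          have hjk : (j':ℕ) = k := by rw [hl1]; simp
          omega
      · rw [if_neg hl1] at v1
        by_cases hl2 : j = Fin.last k
        · rw [if_pos hl2] at v2
          have hjk : (j:ℕ) = k := by rw [hl2]; simp
          omega
        · rw [if_neg hl2] at v2; omega
    have hsub : Good.image φ1 ∪ Good.image φ2 ⊆ F := by
      intro a ha
      rcases Finset.mem_union.1 ha with h | h
      · obtain ⟨j, hj, hj'⟩ := Finset.mem_image.1 h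
        rw [← hj']; exact (hmemF j hj).1
      · obtain ⟨j, hj, hj'⟩ := Finset.mem_image.1 h
        rw [← hj']; exact (hmemF j hj).2
    have hcard : 2 * Good.card ≤ F.card := by
      have h1 := Finset.card_le_card hsub
      rw [Finset.card_union_of_disjoint hdisj, Finset.card_image_of_injOn hinj1,
        Finset.card_image_of_injOn hinj2] at h1
      omega
    omega

noncomputable def toC (p : Pt) : ℂ := ⟨p 0, p 1⟩

lemma dist_toC (p q : Pt) : dist (toC p) (toC q) = dist p q := by
  rw [Complex.dist_eq, EuclideanSpace.dist_eq, Complex.norm_def, Complex.normSq_apply]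
  have h1 : (toC p - toC q).re = p 0 - q 0 := rfl
  have h2 : (toC p - toC q).im = p 1 - q 1 := rfl
  rw [h1, h2, Fin.sum_univ_two]
  congr 1
  rw [Real.dist_eq, Real.dist_eq, sq_abs, sq_abs]
  ring

lemma abs_toC_sub (p q : Pt) : ‖toC p - toC q‖ = dist p q := by
  rw [← Complex.dist_eq]; exact dist_toC p q

-- numeric consequences packaged
lemma cos_bound_27 {r₀ : ℝ} (hr : 1 ≤ r₀) (hs7 : 2*r₀*Real.sin (Real.pi/7) < 1) :
    2*r₀*Real.cos (2*Real.pi/7) ≤ 1 + r₀ := by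
  have hpy := Real.sin_sq_add_cos_sq (Real.pi/7)
  have hc2 : Real.cos (2*(Real.pi/7)) = Real.cos (Real.pi/7)^2 - Real.sin (Real.pi/7)^2 :=
    Real.cos_two_mul' _
  have he : 2*Real.pi/7 = 2*(Real.pi/7) := by ring
  rw [he, hc2]
  have hs := sin_pi7_gt
  nlinarith [hs7, hr, hs]

lemma cos_bound_25 {r₀ : ℝ} (hr : 1 ≤ r₀) (hs7 : 2*r₀*Real.sin (Real.pi/7) < 1) :
    2*r₀*Real.cos (2*Real.pi/5) ≤ 1 + r₀ := by
  have h1 : Real.cos (2*Real.pi/5) ≤ Real.cos (2*Real.pi/7) := by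
    apply Real.cos_le_cos_of_nonneg_of_le_pi
    · positivity
    · linarith [Real.pi_pos]
    · linarith [Real.pi_pos]
  have h2 := cos_bound_27 hr hs7
  nlinarith [h1, h2, hr]

lemma annulus_card_le_six {r₀ : ℝ} (hr : 1 ≤ r₀) (hs7 : 2*r₀*Real.sin (Real.pi/7) < 1)
    {n : ℕ} (x : Fin n → Pt) (c : Pt) (s : Finset (Fin n))
    (hball : ∀ i ∈ s, 1 ≤ dist (x i) c ∧ dist (x i) c ≤ r₀)
    (hsep : ∀ i ∈ s, ∀ j ∈ s, i ≠ j → 1 ≤ dist (x i) (x j)) :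
    s.card ≤ 6 := by
  have hπ := Real.pi_pos
  set θ : Fin n → ℝ := fun i => Complex.arg (toC (x i) - toC c) with hθdef
  apply card_le_six_of_circsep s θ (fun i _ => Complex.arg_mem_Ioc _)
  intro i hi j hj hij
  by_contra hle
  push_neg at hle
  have habs : ∀ l, l ∈ s → 1 ≤ ‖toC (x l) - toC c‖ ∧ ‖toC (x l) - toC c‖ ≤ r₀ := by
    intro l hl
    rw [abs_toC_sub]
    exact hball l hl
  have hchord := chord_le hr (by positivity : (0:ℝ) ≤ 2*Real.pi/7) (by linarith)
    (cos_bound_27 hr hs7) (habs i hi).1 (habs i hi).2 (habs j hj).1 (habs j hj).2 hle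
  have he : (toC (x i) - toC c) - (toC (x j) - toC c) = toC (x i) - toC (x j) := by ring
  rw [he, abs_toC_sub] at hchord
  have he2 : (2*Real.pi/7)/2 = Real.pi/7 := by ring
  rw [he2] at hchord
  have := hsep i hi j hj hij
  linarith

lemma annulus_pairs {r₀ : ℝ} (hr : 1 ≤ r₀) (hs7 : 2*r₀*Real.sin (Real.pi/7) < 1)
    {n : ℕ} (x : Fin n → Pt) (c : Pt) (s : Finset (Fin n))
    (hball : ∀ i ∈ s, 1 ≤ dist (x i) c ∧ dist (x i) c ≤ r₀) :
    2 * (s.card - 4) ≤ ((s ×ˢ s).filter (fun q : Fin n × Fin n =>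
      q.1 ≠ q.2 ∧ dist (x q.1) (x q.2) ≤ 2*r₀*Real.sin (Real.pi/5))).card := by
  classical
  have hπ := Real.pi_pos
  set θ : Fin n → ℝ := fun i => Complex.arg (toC (x i) - toC c) with hθdef
  refine le_trans (good_pairs s θ (fun i _ => Complex.arg_mem_Ioc _)) (Finset.card_le_card ?_)
  rintro ⟨i, j⟩ ha
  obtain ⟨hij, hne, hd⟩ := Finset.mem_filter.1 ha
  have hi : i ∈ s := (Finset.mem_product.1 hij).1
  have hj : j ∈ s := (Finset.mem_product.1 hij).2
  refine Finset.mem_filter.2 ⟨hij, hne, ?_⟩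
  have habs : ∀ l, l ∈ s → 1 ≤ ‖toC (x l) - toC c‖ ∧ ‖toC (x l) - toC c‖ ≤ r₀ := by
    intro l hl
    rw [abs_toC_sub]
    exact hball l hl
  have hchord := chord_le hr (by positivity : (0:ℝ) ≤ 2*Real.pi/5) (by linarith)
    (cos_bound_25 hr hs7) (habs i hi).1 (habs i hi).2 (habs j hj).1 (habs j hj).2 hd
  have he : (toC (x i) - toC c) - (toC (x j) - toC c) = toC (x i) - toC (x j) := by ring
  rw [he, abs_toC_sub] at hchord
  have he2 : (2*Real.pi/5)/2 = Real.pi/5 := by ring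
  rw [he2] at hchord
  exact hchord

end AuxIonic

/-- For configurations with nonnegative net charge, `E(C) ≥ -2n + 2Q(C)`;
conversely if all atoms of charge `-1` are 4-bonded, all bonds have unit length and the
configuration is repulsion-free, then equality holds. -/
theorem net_charge_controls_energy (r₀ : ℝ) (Va Vr : ℝ → EReal)
    (h : PotentialAssumptions r₀ Va Vr) (n : ℕ) (C : Config n)
    (hQ : 0 ≤ netCharge C) :
    ((((-2) * (n : ℝ) + 2 * (netCharge C : ℝ) : ℝ)) : EReal) ≤ energy Va Vr C ∧
    (((∀ i : Fin n, C.q i = -1 → (nbhd r₀ C i).ncard = 4) ∧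
      (∀ i j : Fin n, (bondGraph r₀ C).Adj i j → dist (C.x i) (C.x j) = 1) ∧
      (∀ i j : Fin n, i ≠ j → C.q i = C.q j →
        Real.sqrt 2 ≤ dist (C.x i) (C.x j))) →
      energy Va Vr C = ((((-2) * (n : ℝ) + 2 * (netCharge C : ℝ) : ℝ)) : EReal)) := by
  classical
  have hπ := Real.pi_pos
  have hr1 : 1 ≤ r₀ := h.r₀_lb
  have hs7pos : 0 < Real.sin (Real.pi/7) :=
    Real.sin_pos_of_pos_of_lt_pi (by linarith) (by linarith)
  have hs7 : 2*r₀*Real.sin (Real.pi/7) < 1 := by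
    have h2 : (0:ℝ) < 2*Real.sin (Real.pi/7) := by linarith
    have h3 := h.r₀_ub
    rw [inv_eq_one_div, lt_div_iff₀ h2] at h3
    nlinarith [h3]
  have hrs2 : r₀ < Real.sqrt 2 := by
    nlinarith [sin_pi7_gt, hs7, sqrt_two_gt, hr1, hs7pos]
  -- negative atoms
  set Neg := Finset.univ.filter (fun i => C.q i = -1) with hNegDef
  have hNegMem : ∀ i, i ∈ Neg ↔ C.q i = -1 := by
    intro i; rw [hNegDef]; simp
  have hqNe : ∀ i j, C.q i = -1 → C.q j = 1 → i ≠ j := by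
    intro i j hi hj hij
    rw [hij, hj] at hi
    norm_num at hi
  have hq1' : ∀ i, C.q i ≠ -1 → C.q i = 1 := by
    intro i hi; rcases C.hq i with h1 | h1
    · exact h1
    · exact absurd h1 hi
  have hQneg : netCharge C = (n : ℤ) - 2*(Neg.card : ℤ) := by
    have hsplit := Finset.sum_filter_add_sum_filter_not Finset.univ (fun i => C.q i = -1) C.q
    have h1 : ∑ i ∈ Finset.univ.filter (fun i => C.q i = -1), C.q i = -(Neg.card : ℤ) := by
      rw [← hNegDef]
      calc ∑ i ∈ Neg, C.q i = ∑ _i ∈ Neg, (-1 : ℤ) :=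
            Finset.sum_congr rfl (fun i hi => (hNegMem i).1 hi)
        _ = -(Neg.card : ℤ) := by rw [Finset.sum_const]; simp
    have h2 : ∑ i ∈ Finset.univ.filter (fun i => ¬ C.q i = -1), C.q i
        = ((Finset.univ.filter (fun i => ¬ C.q i = -1)).card : ℤ) := by
      calc ∑ i ∈ Finset.univ.filter (fun i => ¬ C.q i = -1), C.q i
          = ∑ _i ∈ Finset.univ.filter (fun i => ¬ C.q i = -1), (1 : ℤ) :=
            Finset.sum_congr rfl (fun i hi => hq1' i (Finset.mem_filter.1 hi).2)
        _ = _ := by rw [Finset.sum_const]; simp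
    have h3 : Neg.card + (Finset.univ.filter (fun i => ¬ C.q i = -1)).card = n := by
      rw [hNegDef, Finset.card_filter_add_card_filter_not, Finset.card_univ,
        Fintype.card_fin]
    have h4 : netCharge C = ∑ i, C.q i := rfl
    rw [h4, ← hsplit, h1, h2]
    omega
  have hQ4 : (-2) * (n:ℝ) + 2*(netCharge C : ℝ) = (-4) * (Neg.card : ℝ) := by
    rw [hQneg]; push_cast; ring
  have hgoalEq : (((-2) * (n : ℝ) + 2 * (netCharge C : ℝ) : ℝ) : EReal)
      = (((-4) * (Neg.card : ℝ) : ℝ) : EReal) :=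
    congrArg (fun r : ℝ => (r : EReal)) hQ4
  -- potential facts
  have hVr0 : ∀ r : ℝ, (0:EReal) ≤ Vr r := by
    intro r; rcases lt_or_ge r 1 with hr | hr
    · rw [h.vr_inf r hr]; exact le_top
    · exact h.vr_nonneg r hr
  have hVam1 : ∀ r : ℝ, ((-1:ℝ):EReal) ≤ Va r := by
    intro r; rcases eq_or_ne r 1 with he | he
    · rw [he, h.va_one]
    · exact (h.va_gt r he).le
  simp only [energy]
  set Sr := ∑ i : Fin n, ∑ j : Fin n,
      (if i ≠ j ∧ C.q i = C.q j then Vr (dist (C.x i) (C.x j)) else 0) with hSrDef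
  set Sa := ∑ i : Fin n, ∑ j : Fin n,
      (if i ≠ j ∧ C.q i ≠ C.q j then Va (dist (C.x i) (C.x j)) else 0) with hSaDef
  constructor
  · -- lower bound
    rw [hgoalEq]
    by_cases hsep : ∀ i j : Fin n, i ≠ j → 1 ≤ dist (C.x i) (C.x j)
    · -- separated case
      set D := 2 * r₀ * Real.sin (Real.pi / 5) with hDDef
      have hsin5 := sin_pi5_gt
      have hD1 : 1 ≤ D := by rw [hDDef]; nlinarith
      set Pos := Finset.univ.filter (fun i => C.q i = 1) with hPosDef
      have hPosMem : ∀ i, i ∈ Pos ↔ C.q i = 1 := by intro i; rw [hPosDef]; simp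
      set N : Fin n → Finset (Fin n) :=
        fun i => Pos.filter (fun j => dist (C.x i) (C.x j) ≤ r₀) with hNDef
      have hNMem : ∀ i j, j ∈ N i ↔ (C.q j = 1 ∧ dist (C.x i) (C.x j) ≤ r₀) := by
        intro i j; rw [hNDef]
        simp only [Finset.mem_filter]
        rw [hPosMem]
      set T := (Finset.univ : Finset (Fin n × Fin n)).filter (fun p =>
        C.q p.1 = 1 ∧ C.q p.2 = 1 ∧ p.1 ≠ p.2 ∧ dist (C.x p.1) (C.x p.2) ≤ D) with hTDef
      have hTMem : ∀ p : Fin n × Fin n, p ∈ T ↔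
          (C.q p.1 = 1 ∧ C.q p.2 = 1 ∧ p.1 ≠ p.2 ∧ dist (C.x p.1) (C.x p.2) ≤ D) := by
        intro p; rw [hTDef]; simp
      -- repulsive bound
      have hrep : ((6*(T.card:ℝ) : ℝ) : EReal) ≤ Sr := by
        have hsum1 : Sr = ∑ p ∈ (Finset.univ : Finset (Fin n × Fin n)),
            (if p.1 ≠ p.2 ∧ C.q p.1 = C.q p.2 then Vr (dist (C.x p.1) (C.x p.2)) else 0) := by
          rw [hSrDef, ← Finset.sum_product', Finset.univ_product_univ]
        have hb : ∀ p ∈ (Finset.univ : Finset (Fin n × Fin n)),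
            (((if p ∈ T then (6:ℝ) else 0) : ℝ) : EReal)
            ≤ (if p.1 ≠ p.2 ∧ C.q p.1 = C.q p.2 then Vr (dist (C.x p.1) (C.x p.2)) else 0) := by
          intro p _
          by_cases hpT : p ∈ T
          · rw [if_pos hpT]
            obtain ⟨hq1, hq2, hne, hd⟩ := (hTMem p).1 hpT
            rw [if_pos ⟨hne, by rw [hq1, hq2]⟩]
            have hd1 : 1 ≤ dist (C.x p.1) (C.x p.2) := hsep _ _ hne
            have hanti := h.vr_antitone _ _ hd1 hd
            exact le_trans (le_of_lt (by rw [hDDef]; exact h.vr_quant)) hanti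
          · rw [if_neg hpT]
            simp only [EReal.coe_zero]
            split_ifs
            · exact hVr0 _
            · exact le_refl _
        have hc1 : ((∑ p ∈ (Finset.univ : Finset (Fin n × Fin n)),
            (if p ∈ T then (6:ℝ) else 0) : ℝ) : EReal) ≤ Sr := by
          rw [ecoe_sum, hsum1]
          exact Finset.sum_le_sum hb
        have hc2 : (∑ p ∈ (Finset.univ : Finset (Fin n × Fin n)),
            (if p ∈ T then (6:ℝ) else 0)) = 6*(T.card:ℝ) := by
          rw [Finset.sum_ite_mem, Finset.univ_inter, Finset.sum_const, nsmul_eq_mul]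
          ring
        rw [← hc2]
        exact hc1
      -- attractive bound
      have hatt : (((-2)*(∑ i ∈ Neg, ((N i).card:ℝ)) : ℝ) : EReal) ≤ Sa := by
        have hsum1 : Sa = ∑ p ∈ (Finset.univ : Finset (Fin n × Fin n)),
            (if p.1 ≠ p.2 ∧ C.q p.1 ≠ C.q p.2 then Va (dist (C.x p.1) (C.x p.2)) else 0) := by
          rw [hSaDef, ← Finset.sum_product', Finset.univ_product_univ]
        set lowA : Fin n × Fin n → ℝ :=
          fun p => if p.1 ∈ Neg ∧ p.2 ∈ N p.1 then (-1:ℝ) else 0 with hlowA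
        set lowB : Fin n × Fin n → ℝ :=
          fun p => if p.2 ∈ Neg ∧ p.1 ∈ N p.2 then (-1:ℝ) else 0 with hlowB
        have hb : ∀ p ∈ (Finset.univ : Finset (Fin n × Fin n)),
            ((lowA p + lowB p : ℝ) : EReal)
            ≤ (if p.1 ≠ p.2 ∧ C.q p.1 ≠ C.q p.2 then Va (dist (C.x p.1) (C.x p.2)) else 0) := by
          intro p _
          by_cases hA : p.1 ∈ Neg ∧ p.2 ∈ N p.1
          · have hq1 : C.q p.1 = -1 := (hNegMem _).1 hA.1
            have hq2 : C.q p.2 = 1 := ((hNMem _ _).1 hA.2).1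
            have hne : p.1 ≠ p.2 := hqNe _ _ hq1 hq2
            have hBfalse : ¬ (p.2 ∈ Neg ∧ p.1 ∈ N p.2) := by
              rintro ⟨hB1, -⟩
              rw [hNegMem] at hB1
              rw [hq2] at hB1
              norm_num at hB1
            have hlv : lowA p + lowB p = -1 := by
              rw [hlowA, hlowB]; simp only []
              rw [if_pos hA, if_neg hBfalse]; ring
            rw [hlv, if_pos ⟨hne, by rw [hq1, hq2]; norm_num⟩]
            exact hVam1 _
          · by_cases hB : p.2 ∈ Neg ∧ p.1 ∈ N p.2
            · have hq2 : C.q p.2 = -1 := (hNegMem _).1 hB.1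
              have hq1 : C.q p.1 = 1 := ((hNMem _ _).1 hB.2).1
              have hne : p.1 ≠ p.2 := (hqNe _ _ hq2 hq1).symm
              have hlv : lowA p + lowB p = -1 := by
                rw [hlowA, hlowB]; simp only []
                rw [if_neg hA, if_pos hB]; ring
              rw [hlv, if_pos ⟨hne, by rw [hq1, hq2]; norm_num⟩]
              exact hVam1 _
            · have hlv : lowA p + lowB p = 0 := by
                rw [hlowA, hlowB]; simp only []
                rw [if_neg hA, if_neg hB]; ring
              rw [hlv]
              split_ifs with hc
              · -- opposite charges, not neighbors: Va = 0
                obtain ⟨hne, hqq⟩ := hc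
                rcases C.hq p.1 with hq1 | hq1
                · have hq2 : C.q p.2 = -1 := by
                    rcases C.hq p.2 with h2 | h2
                    · exact absurd (by rw [hq1, h2]) hqq
                    · exact h2
                  have hnB : ¬ (dist (C.x p.2) (C.x p.1) ≤ r₀) := by
                    intro hd
                    exact hB ⟨(hNegMem _).2 hq2, (hNMem _ _).2 ⟨hq1, hd⟩⟩
                  have : r₀ < dist (C.x p.1) (C.x p.2) := by
                    rw [dist_comm]; exact lt_of_not_ge hnB
                  rw [h.va_zero _ this]; simp
                · have hq2 : C.q p.2 = 1 := by
                    rcases C.hq p.2 with h2 | h2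
                    · exact h2
                    · exact absurd (by rw [hq1, h2]) hqq
                  have hnA : ¬ (dist (C.x p.1) (C.x p.2) ≤ r₀) := by
                    intro hd
                    exact hA ⟨(hNegMem _).2 hq1, (hNMem _ _).2 ⟨hq2, hd⟩⟩
                  rw [h.va_zero _ (lt_of_not_ge hnA)]; simp
              · exact le_refl _
        have hsA : (∑ p ∈ (Finset.univ : Finset (Fin n × Fin n)), lowA p)
            = ∑ i ∈ Neg, (-1:ℝ)*((N i).card:ℝ) := by
          rw [← Finset.univ_product_univ, Finset.sum_product]
          have hinner : ∀ i : Fin n, (∑ j : Fin n, lowA (i, j))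
              = (if i ∈ Neg then (-1:ℝ)*((N i).card:ℝ) else 0) := by
            intro i
            by_cases hi : i ∈ Neg
            · rw [if_pos hi]
              have : ∀ j : Fin n, lowA (i, j) = if j ∈ N i then (-1:ℝ) else 0 := by
                intro j; rw [hlowA]; simp only []
                by_cases hj : j ∈ N i
                · rw [if_pos ⟨hi, hj⟩, if_pos hj]
                · rw [if_neg (fun hc => hj hc.2), if_neg hj]
              rw [Finset.sum_congr rfl (fun j _ => this j), Finset.sum_ite_mem,
                Finset.univ_inter, Finset.sum_const, nsmul_eq_mul]
              ring
            · rw [if_neg hi]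
              apply Finset.sum_eq_zero
              intro j _
              rw [hlowA]; simp only []
              rw [if_neg (fun hc => hi hc.1)]
          rw [Finset.sum_congr rfl (fun i _ => hinner i), Finset.sum_ite_mem,
            Finset.univ_inter]
        have hsB : (∑ p ∈ (Finset.univ : Finset (Fin n × Fin n)), lowB p)
            = ∑ i ∈ Neg, (-1:ℝ)*((N i).card:ℝ) := by
          rw [← Finset.univ_product_univ, Finset.sum_product]
          rw [Finset.sum_comm]
          have hinner : ∀ j : Fin n, (∑ i : Fin n, lowB (i, j))
              = (if j ∈ Neg then (-1:ℝ)*((N j).card:ℝ) else 0) := by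
            intro j
            by_cases hj : j ∈ Neg
            · rw [if_pos hj]
              have : ∀ i : Fin n, lowB (i, j) = if i ∈ N j then (-1:ℝ) else 0 := by
                intro i; rw [hlowB]; simp only []
                by_cases hi : i ∈ N j
                · rw [if_pos ⟨hj, hi⟩, if_pos hi]
                · rw [if_neg (fun hc => hi hc.2), if_neg hi]
              rw [Finset.sum_congr rfl (fun i _ => this i), Finset.sum_ite_mem,
                Finset.univ_inter, Finset.sum_const, nsmul_eq_mul]
              ring
            · rw [if_neg hj]
              apply Finset.sum_eq_zero
              intro i _
              rw [hlowB]; simp only []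
              rw [if_neg (fun hc => hj hc.1)]
          rw [Finset.sum_congr rfl (fun j _ => hinner j), Finset.sum_ite_mem,
            Finset.univ_inter]
        have hlowsum : (∑ p ∈ (Finset.univ : Finset (Fin n × Fin n)), (lowA p + lowB p))
            = (-2)*(∑ i ∈ Neg, ((N i).card:ℝ)) := by
          rw [Finset.sum_add_distrib, hsA, hsB, Finset.mul_sum, ← Finset.sum_add_distrib]
          exact Finset.sum_congr rfl (fun i _ => by ring)
        calc (((-2)*(∑ i ∈ Neg, ((N i).card:ℝ)) : ℝ) : EReal)
            = ((∑ p ∈ (Finset.univ : Finset (Fin n × Fin n)), (lowA p + lowB p) : ℝ) : EReal) := by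
              rw [hlowsum]
          _ = ∑ p ∈ (Finset.univ : Finset (Fin n × Fin n)), ((lowA p + lowB p : ℝ) : EReal) :=
              ecoe_sum _ _
          _ ≤ Sa := by rw [hsum1]; exact Finset.sum_le_sum hb
      -- counting bound
      have hNball : ∀ i ∈ Neg, ∀ j ∈ N i,
          1 ≤ dist (C.x j) (C.x i) ∧ dist (C.x j) (C.x i) ≤ r₀ := by
        intro i hi j hj
        obtain ⟨hqj, hdj⟩ := (hNMem i j).1 hj
        have hne : i ≠ j := hqNe i j ((hNegMem i).1 hi) hqj
        constructor
        · rw [dist_comm]; exact hsep i j hne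
        · rw [dist_comm]; exact hdj
      set K := Neg.sigma (fun i => ((N i) ×ˢ (N i)).filter
        (fun p : Fin n × Fin n => p.1 ≠ p.2 ∧ dist (C.x p.1) (C.x p.2) ≤ D)) with hKDef
      have hKlb : ∑ i ∈ Neg, 2*((N i).card - 4) ≤ K.card := by
        rw [hKDef, Finset.card_sigma]
        apply Finset.sum_le_sum
        intro i hi
        have := annulus_pairs hr1 hs7 C.x (C.x i) (N i) (fun j hj => hNball i hi j hj)
        rw [← hDDef] at this
        exact this
      have hmapsto : ∀ a ∈ K, a.2 ∈ T := by
        rintro ⟨i, p⟩ ha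
        rw [hKDef, Finset.mem_sigma] at ha
        obtain ⟨hi, hp⟩ := ha
        obtain ⟨hpp, hne, hd⟩ := Finset.mem_filter.1 hp
        obtain ⟨h1, h2⟩ := Finset.mem_product.1 hpp
        exact (hTMem p).2 ⟨((hNMem i p.1).1 h1).1, ((hNMem i p.2).1 h2).1, hne, hd⟩
      have hfib : ∀ b ∈ T, (K.filter (fun a => a.2 = b)).card ≤ 6 := by
        intro b hb
        have hbq1 : C.q b.1 = 1 := ((hTMem b).1 hb).1
        set M := Neg.filter (fun i =>
          1 ≤ dist (C.x i) (C.x b.1) ∧ dist (C.x i) (C.x b.1) ≤ r₀) with hMDef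
        have hserve : (K.filter (fun a => a.2 = b)).card ≤ M.card := by
          apply Finset.card_le_card_of_injOn (fun a => a.1)
          · rintro ⟨i, p⟩ ha
            obtain ⟨haK, hab⟩ := Finset.mem_filter.1 ha
            rw [hKDef, Finset.mem_sigma] at haK
            obtain ⟨hi, hp⟩ := haK
            obtain ⟨hpp, -, -⟩ := Finset.mem_filter.1 hp
            have h1 : p.1 ∈ N i := (Finset.mem_product.1 hpp).1
            have hb1 : p.1 = b.1 := by
              have : p = b := hab
              rw [this]
            obtain ⟨hq1, hd1⟩ := (hNMem i p.1).1 h1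
            have hne : i ≠ p.1 := hqNe i p.1 ((hNegMem i).1 hi) hq1
            rw [hMDef]
            refine Finset.mem_filter.2 ⟨hi, ?_, ?_⟩
            · rw [← hb1]; exact hsep i p.1 hne
            · rw [← hb1]; exact hd1
          · rintro ⟨i, p⟩ ha ⟨i', p'⟩ ha' hii
            have hp : p = b := (Finset.mem_filter.1 ha).2
            have hp' : p' = b := (Finset.mem_filter.1 ha').2
            simp only [] at hii
            subst hp
            subst hp'
            rw [hii]
        refine le_trans hserve (annulus_card_le_six hr1 hs7 C.x (C.x b.1) M ?_ ?_)
        · intro i hi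
          rw [hMDef] at hi
          exact (Finset.mem_filter.1 hi).2
        · intro i hi j hj hij
          exact hsep i j hij
      have hK6T : K.card ≤ 6 * T.card :=
        Finset.card_le_mul_card_image_of_maps_to hmapsto 6 hfib
      have hSgk : ∑ i ∈ Neg, (N i).card ≤ 4*Neg.card + 3*T.card := by
        have h1 : ∑ i ∈ Neg, (N i).card ≤ ∑ i ∈ Neg, (4 + ((N i).card - 4)) :=
          Finset.sum_le_sum (fun i _ => by omega)
        rw [Finset.sum_add_distrib, Finset.sum_const, smul_eq_mul] at h1
        have h2 : ∑ i ∈ Neg, 2*((N i).card - 4) = 2 * ∑ i ∈ Neg, ((N i).card - 4) :=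
          (Finset.mul_sum _ _ _).symm
        omega
      -- final combination
      calc (((-4) * (Neg.card : ℝ) : ℝ) : EReal)
          ≤ (((1/2)*(6*(T.card:ℝ)) + (1/2)*((-2)*(∑ i ∈ Neg, ((N i).card:ℝ))) : ℝ) : EReal) := by
            apply EReal.coe_le_coe_iff.2
            have hcast : (∑ i ∈ Neg, ((N i).card:ℝ)) = ((∑ i ∈ Neg, (N i).card : ℕ) : ℝ) := by
              push_cast; ring
            have hc : ((∑ i ∈ Neg, (N i).card : ℕ):ℝ) ≤ 4*(Neg.card:ℝ) + 3*(T.card:ℝ) := by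
              exact_mod_cast hSgk
            rw [hcast]
            linarith
        _ = (((1/2)*(6*(T.card:ℝ)) : ℝ) : EReal)
            + (((1/2)*((-2)*(∑ i ∈ Neg, ((N i).card:ℝ))) : ℝ) : EReal) := by
            rw [← EReal.coe_add]
        _ ≤ ((1/2 : ℝ) : EReal) * Sr + ((1/2 : ℝ) : EReal) * Sa :=
            add_le_add (ecoe_mul_le (by norm_num) hrep) (ecoe_mul_le (by norm_num) hatt)
    · -- non-separated: energy is ⊤
      push_neg at hsep
      obtain ⟨i0, j0, hne0, hd0⟩ := hsep
      have hSaterm : ∀ i j : Fin n,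
          (if i ≠ j ∧ C.q i ≠ C.q j then Va (dist (C.x i) (C.x j)) else 0) ≠ ⊥ := by
        intro i j
        split_ifs
        · intro hbot
          have := hVam1 (dist (C.x i) (C.x j))
          rw [hbot] at this
          exact EReal.coe_ne_bot _ (le_bot_iff.1 this)
        · simp
      have hSrterm : ∀ i j : Fin n,
          (if i ≠ j ∧ C.q i = C.q j then Vr (dist (C.x i) (C.x j)) else 0) ≠ ⊥ := by
        intro i j
        split_ifs
        · intro hbot
          have := hVr0 (dist (C.x i) (C.x j))
          rw [hbot] at this
          simp at this
        · simp
      have hSa_ne : Sa ≠ ⊥ := by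
        rw [hSaDef]
        exact esum_ne_bot _ _ (fun i _ => esum_ne_bot _ _ (fun j _ => hSaterm i j))
      have hSr_ne : Sr ≠ ⊥ := by
        rw [hSrDef]
        exact esum_ne_bot _ _ (fun i _ => esum_ne_bot _ _ (fun j _ => hSrterm i j))
      have hhalfpos : (0:ℝ) < 1/2 := by norm_num
      rcases eq_or_ne (C.q i0) (C.q j0) with hqq | hqq
      · have hSrtop : Sr = ⊤ := by
          rw [hSrDef]
          refine esum_eq_top Finset.univ _ (Finset.mem_univ i0) ?_
            (fun b _ => esum_ne_bot _ _ (fun c _ => hSrterm b c))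
          refine esum_eq_top Finset.univ _ (Finset.mem_univ j0) ?_ (fun c _ => hSrterm i0 c)
          rw [if_pos ⟨hne0, hqq⟩, h.vr_inf _ hd0]
        have htop : ((1/2 : ℝ) : EReal) * Sr + ((1/2 : ℝ) : EReal) * Sa = ⊤ := by
          rw [hSrtop, EReal.coe_mul_top_of_pos hhalfpos]
          exact EReal.top_add_of_ne_bot (ecoe_mul_ne_bot hhalfpos hSa_ne)
        rw [htop]
        exact le_top
      · have hSatop : Sa = ⊤ := by
          rw [hSaDef]
          refine esum_eq_top Finset.univ _ (Finset.mem_univ i0) ?_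
            (fun b _ => esum_ne_bot _ _ (fun c _ => hSaterm b c))
          refine esum_eq_top Finset.univ _ (Finset.mem_univ j0) ?_ (fun c _ => hSaterm i0 c)
          rw [if_pos ⟨hne0, hqq⟩, h.va_inf _ hd0]
        have htop : ((1/2 : ℝ) : EReal) * Sr + ((1/2 : ℝ) : EReal) * Sa = ⊤ := by
          rw [hSatop, EReal.coe_mul_top_of_pos hhalfpos]
          exact EReal.add_top_of_ne_bot (ecoe_mul_ne_bot hhalfpos hSr_ne)
        rw [htop]
        exact le_top
  · -- equality case
    rintro ⟨h4, hunit, hrf⟩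
    have hsqrt2pos : (0:ℝ) < Real.sqrt 2 := by nlinarith [sqrt_two_gt]
    have hkey : ∀ a b : Fin n, C.q a = -1 → C.q b = 1 → C.x a ≠ C.x b := by
      intro a b hqa hqb hxab
      have hnc := h4 a hqa
      have hne : (nbhd r₀ C a).Nonempty :=
        Set.nonempty_of_ncard_ne_zero (by rw [hnc]; norm_num)
      obtain ⟨y, hy⟩ := hne
      simp only [nbhd, Set.mem_setOf_eq] at hy
      obtain ⟨⟨k, hky⟩, hyne, hydist⟩ := hy
      have hkne_a : k ≠ a := fun he => hyne (by rw [← hky, he])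
      rcases C.hq k with hk | hk
      · have hkb : k ≠ b := by
          intro he
          apply hyne
          rw [← hky, he]
          exact hxab.symm
        have hthis := hrf k b hkb (by rw [hk, hqb])
        rw [← hxab, hky] at hthis
        linarith [hydist, hrs2, hthis]
      · have hthis := hrf k a hkne_a (by rw [hk, hqa])
        rw [hky] at hthis
        linarith [hydist, hrs2, hthis]
    have hxinj : Function.Injective C.x := by
      intro a b hab
      by_contra hne
      rcases eq_or_ne (C.q a) (C.q b) with hqq | hqq
      · have hthis := hrf a b hne hqq
        rw [hab] at hthis
        simp only [dist_self] at hthis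
        linarith
      · rcases C.hq a with ha1 | ha1
        · have hb1 : C.q b = -1 := by
            rcases C.hq b with h1 | h1
            · exact absurd (by rw [ha1, h1]) hqq
            · exact h1
          exact hkey b a hb1 ha1 hab.symm
        · have hb1 : C.q b = 1 := by
            rcases C.hq b with h1 | h1
            · exact h1
            · exact absurd (by rw [ha1, h1]) hqq
          exact hkey a b ha1 hb1 hab
    have hSr0 : Sr = 0 := by
      rw [hSrDef]
      apply Finset.sum_eq_zero
      intro i _
      apply Finset.sum_eq_zero
      intro j _
      split_ifs with hc
      · exact (h.vr_zero_iff _).2 (hrf i j hc.1 hc.2)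
      · rfl
    set bb : Fin n → Fin n → ℝ := fun i j =>
      if i ≠ j ∧ C.q i ≠ C.q j ∧ dist (C.x i) (C.x j) ≤ r₀ then -1 else 0 with hbbDef
    have hterm : ∀ i j, (if i ≠ j ∧ C.q i ≠ C.q j then Va (dist (C.x i) (C.x j)) else 0)
        = ((bb i j : ℝ) : EReal) := by
      intro i j
      by_cases hc : i ≠ j ∧ C.q i ≠ C.q j
      · rw [if_pos hc]
        by_cases hd : dist (C.x i) (C.x j) ≤ r₀
        · have hadj : (bondGraph r₀ C).Adj i j := ⟨fun he => hc.1 (hxinj he), hd⟩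
          have h1 : dist (C.x i) (C.x j) = 1 := hunit i j hadj
          have hb1 : bb i j = -1 := by
            rw [hbbDef]; simp only []
            rw [if_pos ⟨hc.1, hc.2, hd⟩]
          rw [h1, h.va_one, hb1]
        · have hb0 : bb i j = 0 := by
            rw [hbbDef]; simp only []
            rw [if_neg (fun hcc => hd hcc.2.2)]
          rw [h.va_zero _ (lt_of_not_ge hd), hb0]
          simp
      · rw [if_neg hc]
        have hb0 : bb i j = 0 := by
          rw [hbbDef]; simp only []
          rw [if_neg (fun hcc => hc ⟨hcc.1, hcc.2.1⟩)]
        rw [hb0]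
        simp
    have hSaval : Sa = ((∑ i : Fin n, ∑ j : Fin n, bb i j : ℝ) : EReal) := by
      rw [hSaDef, ecoe_sum]
      apply Finset.sum_congr rfl
      intro i _
      rw [ecoe_sum]
      exact Finset.sum_congr rfl (fun j _ => (hterm i j).symm) |>.symm
    set F := (Finset.univ : Finset (Fin n × Fin n)).filter
      (fun p => p.1 ≠ p.2 ∧ C.q p.1 ≠ C.q p.2 ∧ dist (C.x p.1) (C.x p.2) ≤ r₀) with hFDef
    have hFsum : (∑ i : Fin n, ∑ j : Fin n, bb i j) = -(F.card : ℝ) := by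
      rw [← Finset.sum_product', Finset.univ_product_univ]
      have hbF : ∀ p : Fin n × Fin n, bb p.1 p.2 = if p ∈ F then (-1:ℝ) else 0 := by
        intro p
        rw [hbbDef, hFDef]
        simp only [Finset.mem_filter, Finset.mem_univ, true_and]
      rw [Finset.sum_congr rfl (fun p _ => hbF p), Finset.sum_ite_mem, Finset.univ_inter,
        Finset.sum_const, nsmul_eq_mul]
      ring
    set F1 := F.filter (fun p => C.q p.1 = -1) with hF1Def
    have hcard12 : F.card = 2 * F1.card := by
      have hsplit := Finset.card_filter_add_card_filter_not
        (s := F) (p := fun p => C.q p.1 = -1)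
      have hswap : (F.filter (fun p => ¬ C.q p.1 = -1)).card = F1.card := by
        apply Finset.card_bij (fun p _ => Prod.swap p)
        · rintro ⟨p1, p2⟩ hp
          obtain ⟨hpF, hqa⟩ := Finset.mem_filter.1 hp
          rw [hFDef] at hpF
          obtain ⟨-, hne, hqq, hd⟩ := Finset.mem_filter.1 hpF
          have hqp1 : C.q p1 = 1 := hq1' p1 hqa
          have hqp2 : C.q p2 = -1 := by
            rcases C.hq p2 with h1 | h1
            · exact absurd (by rw [hqp1, h1]) hqq
            · exact h1
          rw [hF1Def]
          refine Finset.mem_filter.2 ⟨?_, hqp2⟩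
          rw [hFDef]
          refine Finset.mem_filter.2 ⟨Finset.mem_univ _, Ne.symm hne,
            fun hcc => hqq hcc.symm, ?_⟩
          rw [dist_comm]
          exact hd
        · rintro ⟨p1, p2⟩ h1 ⟨p3, p4⟩ h2 he
          exact Prod.swap_injective he
        · rintro ⟨p1, p2⟩ hp
          rw [hF1Def] at hp
          obtain ⟨hpF, hqa⟩ := Finset.mem_filter.1 hp
          rw [hFDef] at hpF
          obtain ⟨-, hne, hqq, hd⟩ := Finset.mem_filter.1 hpF
          have hqp2 : C.q p2 = 1 := by
            rcases C.hq p2 with h1 | h1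
            · exact h1
            · exact absurd (by rw [hqa, h1]) hqq
          refine ⟨(p2, p1), ?_, rfl⟩
          refine Finset.mem_filter.2 ⟨?_, by simp [hqp2]⟩
          rw [hFDef]
          refine Finset.mem_filter.2 ⟨Finset.mem_univ _, Ne.symm hne,
            fun hcc => hqq hcc.symm, ?_⟩
          rw [dist_comm]
          exact hd
      rw [← hF1Def] at hsplit
      omega
    have hfiber : ∀ i ∈ Neg, (F1.filter (fun p => p.1 = i)).card = 4 := by
      intro i hi
      have hqi : C.q i = -1 := (hNegMem i).1 hi
      set B := Finset.univ.filter (fun j =>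
        i ≠ j ∧ C.q i ≠ C.q j ∧ dist (C.x i) (C.x j) ≤ r₀) with hBDef
      have hc1 : (F1.filter (fun p => p.1 = i)).card = B.card := by
        apply Finset.card_bij (fun p _ => p.2)
        · rintro ⟨p1, p2⟩ hp
          obtain ⟨hpF1, hp1i⟩ := Finset.mem_filter.1 hp
          rw [hF1Def] at hpF1
          obtain ⟨hpF, -⟩ := Finset.mem_filter.1 hpF1
          rw [hFDef] at hpF
          obtain ⟨-, hne, hqq, hd⟩ := Finset.mem_filter.1 hpF
          simp only [] at hp1i
          subst hp1i
          rw [hBDef]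
          exact Finset.mem_filter.2 ⟨Finset.mem_univ _, hne, hqq, hd⟩
        · rintro ⟨p1, p2⟩ hp1 ⟨p3, p4⟩ hp2 he
          have e1 : p1 = i := (Finset.mem_filter.1 hp1).2
          have e3 : p3 = i := (Finset.mem_filter.1 hp2).2
          simp only [] at he
          rw [Prod.ext_iff]
          exact ⟨by rw [e1, e3], he⟩
        · intro j hj
          rw [hBDef] at hj
          obtain ⟨-, hne, hqq, hd⟩ := Finset.mem_filter.1 hj
          refine ⟨(i, j), ?_, rfl⟩
          refine Finset.mem_filter.2 ⟨?_, rfl⟩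
          rw [hF1Def]
          refine Finset.mem_filter.2 ⟨?_, hqi⟩
          rw [hFDef]
          exact Finset.mem_filter.2 ⟨Finset.mem_univ _, hne, hqq, hd⟩
      have hnb : nbhd r₀ C i = C.x '' (B : Set (Fin n)) := by
        ext y
        simp only [nbhd, Set.mem_setOf_eq]
        constructor
        · rintro ⟨⟨k, hky⟩, hyne, hydist⟩
          refine ⟨k, ?_, hky⟩
          have hki : i ≠ k := fun he => hyne (by rw [← hky, ← he])
          have hqk : C.q i ≠ C.q k := by
            intro he
            have hthis := hrf i k hki he
            rw [hky, dist_comm] at hthis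
            linarith [hydist, hrs2, hthis]
          have hdk : dist (C.x i) (C.x k) ≤ r₀ := by
            rw [hky, dist_comm]
            exact hydist
          rw [Finset.mem_coe, hBDef]
          exact Finset.mem_filter.2 ⟨Finset.mem_univ _, hki, hqk, hdk⟩
        · rintro ⟨k, hk, hky⟩
          rw [Finset.mem_coe, hBDef] at hk
          obtain ⟨-, hki, hqk, hdk⟩ := Finset.mem_filter.1 hk
          refine ⟨⟨k, hky⟩, ?_, ?_⟩
          · rw [← hky]
            intro he
            exact hki (hxinj he).symm
          · rw [← hky, dist_comm]
            exact hdk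
      have hBc : B.card = 4 := by
        have h1 := h4 i hqi
        rw [hnb, Set.ncard_image_of_injective _ hxinj, Set.ncard_coe_finset] at h1
        exact h1
      rw [hc1, hBc]
    have hF1card : F1.card = 4 * Neg.card := by
      rw [Finset.card_eq_sum_card_fiberwise
        (f := fun p : Fin n × Fin n => p.1) (t := Neg)
        (fun p hp => (hNegMem p.1).2 (Finset.mem_filter.1 hp).2)]
      rw [Finset.sum_congr rfl (fun i hi => hfiber i hi), Finset.sum_const, smul_eq_mul,
        Nat.mul_comm]
    have hF8 : F.card = 8 * Neg.card := by omega
    calc ((1/2 : ℝ) : EReal) * Sr + ((1/2 : ℝ) : EReal) * Sa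
        = ((1/2 : ℝ) : EReal) * 0 + ((1/2 : ℝ) : EReal) * ((-(F.card:ℝ) : ℝ) : EReal) := by
          rw [hSr0, hSaval, hFsum]
      _ = (((1/2) * (-(F.card:ℝ)) : ℝ) : EReal) := by
          rw [mul_zero, zero_add, ← EReal.coe_mul]
      _ = (((-2) * (n:ℝ) + 2*(netCharge C : ℝ) : ℝ) : EReal) := by
          rw [hgoalEq]
          apply congrArg (fun r : ℝ => (r : EReal))
          rw [hF8]
          push_cast
          ring
end

section
/- Let φ be defined by φ(0)=0, φ(1)=1, φ(n) = 2⌊−1/2 + (1/2)√(2n−5)⌋ + 3 for odd n ≥ 3, and φ(n) = 2⌊(1/2)√(2n−4)⌋ + 2 for even n ≥ 2. Then for every n ≥ 2, writing n = 1 + 2k² + 2k + m with k ∈ ℕ₀ and 1 ≤ m ≤ 4k+4, one has: φ(n) = 2 + 2k if 1 ≤ m ≤ 2k+2 and m is odd; φ(n) = 3 + 2k if 1 ≤ m ≤ 2k+2 and m is even; φ(n) = 4 + 2k if 2k+3 ≤ m ≤ 4k+4 and m is odd; and φ(n) = 3 + 2k if 2k+3 ≤ m ≤ 4k+4 and m is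 even. -/
open scoped BigOperators
open Real

/-- Equivalent representation of `φ`: writing `n = 1 + 2k² + 2k + m` with
`1 ≤ m ≤ 4k+4`, the value `φ(n)` is `2+2k`, `3+2k`, `4+2k`, or `3+2k` according to the
position and parity of `m`. -/
theorem phi_representation (n k m : ℕ) (hn : 2 ≤ n)
    (hrep : n = 1 + 2 * k ^ 2 + 2 * k + m) (hm1 : 1 ≤ m) (hm2 : m ≤ 4 * k + 4) :
    (1 ≤ m → m ≤ 2 * k + 2 → m % 2 = 1 → phi n = 2 + 2 * (k : ℤ)) ∧
    (1 ≤ m → m ≤ 2 * k + 2 → m % 2 = 0 → phi n = 3 + 2 * (k : ℤ)) ∧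
    (2 * k + 3 ≤ m → m ≤ 4 * k + 4 → m % 2 = 1 → phi n = 4 + 2 * (k : ℤ)) ∧
    (2 * k + 3 ≤ m → m ≤ 4 * k + 4 → m % 2 = 0 → phi n = 3 + 2 * (k : ℤ)) := by
  have hfloor : ∀ (x : ℝ) (t : ℤ), 0 ≤ (t:ℝ) → ((2*t:ℝ))^2 ≤ x → x < ((2*t+2:ℝ))^2 →
      ⌊(1/2 : ℝ) * Real.sqrt x⌋ = t := by
    intro x t ht h1 h2
    have hx : 0 ≤ x := le_trans (by positivity) h1
    have hs := Real.sq_sqrt hx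
    have hsn := Real.sqrt_nonneg x
    have hl : (2*t:ℝ) ≤ Real.sqrt x := by nlinarith
    have hr : Real.sqrt x < 2*t+2 := by nlinarith
    rw [Int.floor_eq_iff]
    constructor <;> push_cast <;> linarith
  have hfloor2 : ∀ (x : ℝ) (t : ℤ), ((2*t+1:ℝ))^2 ≤ x → x < ((2*t+3:ℝ))^2 →
      ⌊(-(1/2) : ℝ) + (1/2) * Real.sqrt x⌋ = t := by
    intro x t h1 h2
    have hx : 0 ≤ x := le_trans (by positivity) h1
    have hs := Real.sq_sqrt hx
    have hsn := Real.sqrt_nonneg x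
    have hl : (2*t+1:ℝ) ≤ Real.sqrt x := by nlinarith [sq_nonneg (2*(t:ℝ)+1)]
    have hr : Real.sqrt x < 2*t+3 := by nlinarith
    rw [Int.floor_eq_iff]
    constructor <;> push_cast <;> linarith
  have hn0 : n ≠ 0 := by omega
  have hn1 : n ≠ 1 := by omega
  have hk : (0:ℝ) ≤ ((k:ℤ):ℝ) := by positivity
  refine ⟨?_, ?_, ?_, ?_⟩
  · intro _ h2 hpar
    have hne : n % 2 = 0 := by omega
    simp only [phi, hn0, hn1, if_false, hne]
    norm_num
    have hlo : (4*k^2+4*k+4 : ℝ) ≤ 2*n := by exact_mod_cast (Nat.cast_le (α := ℝ)).2 (by omega : 4*k^2+4*k+4 ≤ 2*n)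
    have hhi : (2*(n:ℝ)) < 4*k^2+8*k+8 := by exact_mod_cast (Nat.cast_lt (α := ℝ)).2 (by omega : 2*n < 4*k^2+8*k+8)
    rw [hfloor (2*(n:ℝ) - 4) k hk (by push_cast; nlinarith) (by push_cast; nlinarith)]
    push_cast; ring
  · intro _ h2 hpar
    have hne : n % 2 = 1 := by omega
    simp only [phi, hn0, hn1, if_false, hne, if_true]
    norm_num
    have hlo : (4*k^2+4*k+6 : ℝ) ≤ 2*n := by exact_mod_cast (Nat.cast_le (α := ℝ)).2 (by omega : 4*k^2+4*k+6 ≤ 2*n)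
    have hhi : (2*(n:ℝ)) < 4*k^2+12*k+14 := by exact_mod_cast (Nat.cast_lt (α := ℝ)).2 (by omega : 2*n < 4*k^2+12*k+14)
    rw [hfloor2 (2*(n:ℝ) - 5) k (by push_cast; nlinarith) (by push_cast; nlinarith)]
    push_cast; ring
  · intro h1' h2 hpar
    have hne : n % 2 = 0 := by omega
    simp only [phi, hn0, hn1, if_false, hne]
    norm_num
    have hlo : (4*k^2+8*k+8 : ℝ) ≤ 2*n := by exact_mod_cast (Nat.cast_le (α := ℝ)).2 (by omega : 4*k^2+8*k+8 ≤ 2*n)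
    have hhi : (2*(n:ℝ)) < 4*k^2+16*k+20 := by exact_mod_cast (Nat.cast_lt (α := ℝ)).2 (by omega : 2*n < 4*k^2+16*k+20)
    rw [hfloor (2*(n:ℝ) - 4) (k+1) (by push_cast; positivity) (by push_cast; nlinarith) (by push_cast; nlinarith)]
    push_cast; ring
  · intro h1' h2 hpar
    have hne : n % 2 = 1 := by omega
    simp only [phi, hn0, hn1, if_false, hne, if_true]
    norm_num
    have hlo : (4*k^2+4*k+6 : ℝ) ≤ 2*n := by exact_mod_cast (Nat.cast_le (α := ℝ)).2 (by omega : 4*k^2+4*k+6 ≤ 2*n)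
    have hhi : (2*(n:ℝ)) < 4*k^2+12*k+14 := by exact_mod_cast (Nat.cast_lt (α := ℝ)).2 (by omega : 2*n < 4*k^2+12*k+14)
    rw [hfloor2 (2*(n:ℝ) - 5) k (by push_cast; nlinarith) (by push_cast; nlinarith)]
    push_cast; ring
end
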